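/- arXiv:1103.4569 — 5 statements merged into one kernel-verified Lean document; each statement's English description precedes it below -/
import Mathlib

section
/- For every integer n ≥ 1 and every s > 0, one has ∫_0^s I_n(t)² dt ≤ (s/(2n))·I_n(s)². -/
open MeasureTheory Real intervalIntegral

/-- Modified Bessel function of the first kind of integer order `n`:
`I_n(t) = (1/π) ∫_0^π exp(t cos α) cos(n α) dα`. -/
noncomputable def besselI (n : ℤ) (t : ℝ) : ℝ :=
  (1 / Real.pi) * ∫ α in (0:ℝ)..Real.pi, Real.exp (t * Real.cos α) * Real.cos ((n : ℝ) * α)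

/-- Modified Bessel function of the second kind of integer order `n`:
`K_n(t) = ∫_0^∞ exp(−t cosh α) cosh(n α) dα`. -/
noncomputable def besselK (n : ℤ) (t : ℝ) : ℝ :=
  ∫ α in Set.Ioi (0:ℝ), Real.exp (-t * Real.cosh α) * Real.cosh ((n : ℝ) * α)

/-- Auxiliary moment integrals `J k m = ∫_0^π cos^k α · cos (m α) dα`. -/
private noncomputable def Jb (k m : ℕ) : ℝ :=
  ∫ α in (0:ℝ)..Real.pi, (Real.cos α) ^ k * Real.cos ((m : ℝ) * α)

private lemma Jb_zero_zero : Jb 0 0 = Real.pi := by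
  simp [Jb]

private lemma Jb_zero_succ (m : ℕ) : Jb 0 (m + 1) = 0 := by
  have hm : ((m + 1 : ℕ) : ℝ) ≠ 0 := by positivity
  simp only [Jb, pow_zero, one_mul]
  rw [integral_comp_mul_left (fun x => Real.cos x) hm]
  simp only [integral_cos, mul_zero, Real.sin_zero, sub_zero, smul_eq_mul]
  have h0 : Real.sin (((m+1:ℕ):ℝ) * Real.pi) = 0 := Real.sin_nat_mul_pi (m+1)
  push_cast at h0 ⊢
  simp [h0]

private lemma Jb_rec_zero (k : ℕ) : Jb (k + 1) 0 = Jb k 1 := by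
  simp only [Jb]
  apply intervalIntegral.integral_congr
  intro α _
  simp [pow_succ, mul_comm, mul_assoc, mul_left_comm]

private lemma Jb_rec (k m : ℕ) :
    Jb (k + 1) (m + 1) = (Jb k (m + 2) + Jb k m) / 2 := by
  have hint : ∀ (j l : ℕ), IntervalIntegrable
      (fun α => (Real.cos α) ^ j * Real.cos ((l : ℝ) * α)) volume 0 Real.pi := by
    intro j l
    exact (((Real.continuous_cos.pow j).mul
      ((Real.continuous_cos.comp (continuous_const.mul continuous_id))))).intervalIntegrable _ _
  have key : ∀ α : ℝ, (Real.cos α) ^ (k+1) * Real.cos (((m+1 : ℕ) : ℝ) * α)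
      = ((Real.cos α) ^ k * Real.cos (((m+2 : ℕ) : ℝ) * α)
        + (Real.cos α) ^ k * Real.cos ((m : ℝ) * α)) / 2 := by
    intro α
    have h1 : ((m+2 : ℕ) : ℝ) * α = ((m+1 : ℕ) : ℝ) * α + α := by push_cast; ring
    have h2 : (m : ℝ) * α = ((m+1 : ℕ) : ℝ) * α - α := by push_cast; ring
    rw [h1, h2, Real.cos_add, Real.cos_sub]
    ring
  simp only [Jb]
  rw [intervalIntegral.integral_congr (fun α _ => key α)]
  rw [intervalIntegral.integral_div, intervalIntegral.integral_add (hint k (m+2)) (hint k m)]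

private lemma Jb_nonneg : ∀ k m, 0 ≤ Jb k m := by
  intro k
  induction k with
  | zero =>
    intro m
    cases m with
    | zero => rw [Jb_zero_zero]; exact Real.pi_pos.le
    | succ m => rw [Jb_zero_succ]
  | succ k ih =>
    intro m
    cases m with
    | zero => rw [Jb_rec_zero]; exact ih 1
    | succ m =>
      rw [Jb_rec]
      have h1 := ih (m+2); have h2 := ih m
      linarith

private lemma Jb_eq_zero : ∀ k m, k < m → Jb k m = 0 := by
  intro k
  induction k with
  | zero =>
    intro m hm
    cases m with
    | zero => omega
    | succ m => exact Jb_zero_succ m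
  | succ k ih =>
    intro m hm
    cases m with
    | zero => omega
    | succ m =>
      rw [Jb_rec, ih (m+2) (by omega), ih m (by omega)]
      norm_num

/-- coefficient of the power series of `besselI` -/
private noncomputable def cb (N k : ℕ) : ℝ := Jb k N / (Real.pi * k.factorial)

private lemma cb_nonneg (N k : ℕ) : 0 ≤ cb N k := by
  have := Jb_nonneg k N
  have := Real.pi_pos
  unfold cb
  positivity

private lemma cb_eq_zero (N k : ℕ) (h : k < N) : cb N k = 0 := by
  unfold cb; rw [Jb_eq_zero k N h]; simp

private lemma hasSum_besselI (N : ℕ) (t : ℝ) :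
    HasSum (fun k => cb N k * t ^ k) (besselI (N : ℤ) t) := by
  have hπ : (0:ℝ) ≤ Real.pi := Real.pi_pos.le
  have hπ0 : Real.pi ≠ 0 := Real.pi_ne_zero
  set F : ℕ → ℝ → ℝ :=
    fun k α => (t * Real.cos α) ^ k / (k.factorial : ℝ) * Real.cos ((N : ℝ) * α) with hF
  have hFc : ∀ k, Continuous (F k) := by intro k; rw [hF]; fun_prop
  have hF_int : ∀ k, Integrable (F k) (volume.restrict (Set.Ioc (0:ℝ) Real.pi)) := fun k =>
    (hFc k).integrableOn_Ioc
  have hnorm : ∀ (k : ℕ) (α : ℝ), ‖F k α‖ ≤ |t| ^ k / (k.factorial : ℝ) := by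
    intro k α
    have h1 : |t * Real.cos α| ≤ |t| := by
      rw [abs_mul]; exact mul_le_of_le_one_right (abs_nonneg t) (Real.abs_cos_le_one α)
    have h2 : |Real.cos ((N:ℝ) * α)| ≤ 1 := Real.abs_cos_le_one _
    have h3 : |t * Real.cos α| ^ k ≤ |t| ^ k := pow_le_pow_left₀ (abs_nonneg _) h1 k
    have hk0 : (0:ℝ) < (k.factorial : ℝ) := by exact_mod_cast k.factorial_pos
    simp only [hF, Real.norm_eq_abs]
    calc |(t * Real.cos α) ^ k / (k.factorial : ℝ) * Real.cos ((N:ℝ) * α)|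
        = |t * Real.cos α| ^ k / (k.factorial : ℝ) * |Real.cos ((N:ℝ) * α)| := by
          rw [abs_mul, abs_div, abs_pow, Nat.abs_cast]
      _ ≤ |t * Real.cos α| ^ k / (k.factorial : ℝ) * 1 :=
          mul_le_mul_of_nonneg_left h2 (by positivity)
      _ = |t * Real.cos α| ^ k / (k.factorial : ℝ) := mul_one _
      _ ≤ |t| ^ k / (k.factorial : ℝ) := by gcongr
  have hbound : ∀ k, (∫ α in Set.Ioc (0:ℝ) Real.pi, ‖F k α‖)
      ≤ Real.pi * (|t| ^ k / (k.factorial : ℝ)) := by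
    intro k
    calc (∫ α in Set.Ioc (0:ℝ) Real.pi, ‖F k α‖)
        ≤ ∫ _α in Set.Ioc (0:ℝ) Real.pi, (|t| ^ k / (k.factorial : ℝ)) := by
          apply setIntegral_mono_on (hF_int k).norm
            (integrableOn_const measure_Ioc_lt_top.ne) measurableSet_Ioc
          intro α _; exact hnorm k α
      _ = Real.pi * (|t| ^ k / (k.factorial : ℝ)) := by
          rw [setIntegral_const, smul_eq_mul, Real.volume_real_Ioc_of_le hπ]
          norm_num
  have hsum : Summable (fun k => ∫ α in Set.Ioc (0:ℝ) Real.pi, ‖F k α‖) :=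
    Summable.of_nonneg_of_le (fun k => integral_nonneg fun α => norm_nonneg _) hbound
      ((Real.summable_pow_div_factorial |t|).mul_left Real.pi)
  have key := MeasureTheory.hasSum_integral_of_summable_integral_norm hF_int hsum
  have htsum : ∀ α : ℝ, ∑' k, F k α = Real.exp (t * Real.cos α) * Real.cos ((N:ℝ) * α) := by
    intro α
    have h := (NormedSpace.expSeries_div_hasSum_exp (𝔸 := ℝ) (t * Real.cos α)).mul_right
      (Real.cos ((N:ℝ) * α))
    rw [Real.exp_eq_exp_ℝ]
    exact h.tsum_eq
  have hIk : ∀ k, (∫ α in Set.Ioc (0:ℝ) Real.pi, F k α)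
      = t ^ k / (k.factorial : ℝ) * Jb k N := by
    intro k
    have hfe : ∀ α : ℝ, F k α
        = (t ^ k / (k.factorial : ℝ)) * ((Real.cos α) ^ k * Real.cos ((N:ℝ) * α)) := by
      intro α; simp only [hF, mul_pow]; ring
    simp_rw [hfe]
    rw [MeasureTheory.integral_const_mul, Jb, intervalIntegral.integral_of_le hπ]
  have hcast : (((N : ℤ) : ℝ)) = (N : ℝ) := by push_cast; ring
  rw [besselI, hcast, intervalIntegral.integral_of_le hπ]
  have heq : (∫ α in Set.Ioc (0:ℝ) Real.pi, Real.exp (t * Real.cos α) * Real.cos ((N:ℝ) * α))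
      = ∫ α in Set.Ioc (0:ℝ) Real.pi, ∑' k, F k α :=
    integral_congr_ae (Filter.Eventually.of_forall fun α => (htsum α).symm)
  rw [heq]
  have hfin := key.mul_left (1/Real.pi)
  convert hfin using 1
  case e'_3 => rfl
  funext k
  rw [hIk k]
  have hk : ((k.factorial : ℝ)) ≠ 0 := Nat.cast_ne_zero.2 k.factorial_ne_zero
  unfold cb
  field_simp

private lemma besselI_nonneg (N : ℕ) (t : ℝ) (ht : 0 ≤ t) : 0 ≤ besselI (N : ℤ) t :=
  (hasSum_besselI N t).nonneg (fun k => mul_nonneg (cb_nonneg N k) (pow_nonneg ht k))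

private lemma besselI_mul_le (N : ℕ) (t s : ℝ) (ht : 0 ≤ t) (hts : t ≤ s) :
    besselI (N : ℤ) t * s ^ N ≤ besselI (N : ℤ) s * t ^ N := by
  have h1 := (hasSum_besselI N t).mul_right (s ^ N)
  have h2 := (hasSum_besselI N s).mul_right (t ^ N)
  refine hasSum_le (fun k => ?_) h1 h2
  rcases lt_or_ge k N with hk | hk
  · simp [cb_eq_zero N k hk]
  · obtain ⟨j, rfl⟩ := Nat.exists_eq_add_of_le hk
    have hs : 0 ≤ s := ht.trans hts
    have : t ^ (N + j) * s ^ N ≤ s ^ (N + j) * t ^ N := by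
      rw [pow_add, pow_add]
      have htj : t ^ j ≤ s ^ j := pow_le_pow_left₀ ht hts j
      calc t ^ N * t ^ j * s ^ N ≤ t ^ N * s ^ j * s ^ N := by
            apply mul_le_mul_of_nonneg_right _ (pow_nonneg hs N)
            exact mul_le_mul_of_nonneg_left htj (pow_nonneg ht N)
        _ = s ^ N * s ^ j * t ^ N := by ring
    calc cb N (N+j) * t ^ (N+j) * s ^ N = cb N (N+j) * (t ^ (N+j) * s ^ N) := by ring
      _ ≤ cb N (N+j) * (s ^ (N+j) * t ^ N) :=
          mul_le_mul_of_nonneg_left this (cb_nonneg N (N+j))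
      _ = cb N (N+j) * s ^ (N+j) * t ^ N := by ring

private lemma besselI_continuous (n : ℤ) : Continuous (besselI n) := by
  apply Continuous.mul continuous_const
  exact intervalIntegral.continuous_parametric_intervalIntegral_of_continuous'
    (f := fun t α => Real.exp (t * Real.cos α) * Real.cos ((n : ℝ) * α))
    (by fun_prop) 0 Real.pi

/-- `∫_0^s I_n(t)² dt ≤ (s/(2n))·I_n(s)²` for `n ≥ 1` and `s > 0`. -/
theorem integral_besselI_sq_le (n : ℤ) (hn : 1 ≤ n) (s : ℝ) (hs : 0 < s) :
    (∫ t in (0:ℝ)..s, (besselI n t) ^ 2) ≤ (s / (2 * (n : ℝ))) * (besselI n s) ^ 2 := by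
  obtain ⟨N, rfl⟩ : ∃ N : ℕ, (N : ℤ) = n := ⟨n.toNat, Int.toNat_of_nonneg (by linarith)⟩
  have hN : 1 ≤ N := by exact_mod_cast hn
  set B := besselI (N : ℤ) s with hB
  have hBnn : 0 ≤ B := besselI_nonneg N s hs.le
  have hmain : ∀ t ∈ Set.Icc (0:ℝ) s,
      (besselI (N:ℤ) t) ^ 2 ≤ B ^ 2 / s ^ (2*N) * t ^ (2*N) := by
    intro t ht
    obtain ⟨ht0, hts⟩ := ht
    have h := besselI_mul_le N t s ht0 hts
    have h0 : 0 ≤ besselI (N:ℤ) t * s ^ N :=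
      mul_nonneg (besselI_nonneg N t ht0) (pow_nonneg hs.le N)
    have hsq := mul_self_le_mul_self h0 h
    have hs2 : (0:ℝ) < s ^ (2*N) := pow_pos hs _
    rw [div_mul_eq_mul_div, le_div_iff₀ hs2]
    calc (besselI (N:ℤ) t) ^ 2 * s ^ (2*N)
        = (besselI (N:ℤ) t * s ^ N) * (besselI (N:ℤ) t * s ^ N) := by
          rw [two_mul, pow_add]; ring
      _ ≤ (B * t ^ N) * (B * t ^ N) := hsq
      _ = B ^ 2 * t ^ (2*N) := by rw [two_mul, pow_add]; ring
  have hint1 : IntervalIntegrable (fun t => (besselI (N:ℤ) t) ^ 2) volume 0 s :=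
    ((besselI_continuous _).pow 2).intervalIntegrable _ _
  have hint2 : IntervalIntegrable (fun t => B ^ 2 / s ^ (2*N) * t ^ (2*N)) volume 0 s := by
    apply Continuous.intervalIntegrable; fun_prop
  have hle := intervalIntegral.integral_mono_on hs.le hint1 hint2 hmain
  have hNpos : (0:ℝ) < (N : ℝ) := by exact_mod_cast hN
  calc (∫ t in (0:ℝ)..s, (besselI (N:ℤ) t) ^ 2)
      ≤ ∫ t in (0:ℝ)..s, B ^ 2 / s ^ (2*N) * t ^ (2*N) := hle
    _ = B ^ 2 / s ^ (2*N) * ((s ^ (2*N+1) - 0 ^ (2*N+1)) / ((2*N : ℕ) + 1)) := by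
        rw [intervalIntegral.integral_const_mul, integral_pow]
    _ = B ^ 2 * (s / (2*(N:ℝ)+1)) := by
        rw [zero_pow (by omega : 2*N+1 ≠ 0), sub_zero, pow_succ]
        have hsN : (0:ℝ) < s ^ (2*N) := pow_pos hs _
        push_cast
        field_simp
        ring
    _ ≤ (s / (2 * ((N:ℤ) : ℝ))) * B ^ 2 := by
        push_cast
        rw [mul_comm]
        apply mul_le_mul_of_nonneg_right _ (by positivity)
        apply div_le_div_of_nonneg_left hs.le (by positivity)
        linarith
end

section
/- For every integer n ≥ 1 and every s > 0, one has ∫_0^s I_n(t)² dt ≤ I_n(s)². -/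
open MeasureTheory Real intervalIntegral

noncomputable def bCoef (m n : ℕ) : ℝ :=
  ∫ α in (0:ℝ)..Real.pi, (Real.cos α) ^ m * Real.cos ((n : ℝ) * α)

lemma bCoef_zero_zero : bCoef 0 0 = Real.pi := by
  simp [bCoef]

lemma bCoef_zero (n : ℕ) (hn : n ≠ 0) : bCoef 0 n = 0 := by
  have hc : (n : ℝ) ≠ 0 := Nat.cast_ne_zero.mpr hn
  have : bCoef 0 n = ∫ α in (0:ℝ)..Real.pi, Real.cos ((n:ℝ) * α) := by
    simp [bCoef]
  rw [this, intervalIntegral.integral_comp_mul_left (fun x => Real.cos x) hc]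
  simp [Real.sin_nat_mul_pi]

lemma cos_ident (n : ℕ) (α : ℝ) :
    Real.cos α * Real.cos ((n+1 : ℕ) * α)
      = (Real.cos ((n+2 : ℕ) * α) + Real.cos ((n : ℕ) * α)) / 2 := by
  have h1 := Real.cos_add (((n:ℝ)+1) * α) α
  have h2 := Real.cos_sub (((n:ℝ)+1) * α) α
  push_cast
  have e1 : ((n:ℝ)+2) * α = ((n:ℝ)+1) * α + α := by ring
  have e2 : ((n:ℝ)) * α = ((n:ℝ)+1) * α - α := by ring
  rw [e1, e2, h1, h2]
  ring

lemma contInt (m n : ℕ) :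
    IntervalIntegrable (fun α => (Real.cos α) ^ m * Real.cos ((n : ℝ) * α)) volume 0 Real.pi :=
  (((Real.continuous_cos.pow m).mul (Real.continuous_cos.comp
    (continuous_const.mul continuous_id)))).intervalIntegrable _ _

lemma bCoef_succ_succ (m n : ℕ) :
    bCoef (m+1) (n+1) = (bCoef m (n+2) + bCoef m n) / 2 := by
  have : ∀ α : ℝ, (Real.cos α) ^ (m+1) * Real.cos ((n+1 : ℕ) * α)
      = ((Real.cos α) ^ m * Real.cos ((n+2 : ℕ) * α)
        + (Real.cos α) ^ m * Real.cos ((n : ℕ) * α)) / 2 := by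
    intro α
    have := cos_ident n α
    calc (Real.cos α) ^ (m+1) * Real.cos ((n+1 : ℕ) * α)
        = (Real.cos α) ^ m * (Real.cos α * Real.cos ((n+1 : ℕ) * α)) := by ring
      _ = (Real.cos α) ^ m * ((Real.cos ((n+2 : ℕ) * α) + Real.cos ((n : ℕ) * α)) / 2) := by
          rw [this]
      _ = ((Real.cos α) ^ m * Real.cos ((n+2 : ℕ) * α)
            + (Real.cos α) ^ m * Real.cos ((n : ℕ) * α)) / 2 := by ring
  unfold bCoef
  rw [intervalIntegral.integral_congr (g := fun α => ((Real.cos α) ^ m * Real.cos ((n+2 : ℕ) * α)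
        + (Real.cos α) ^ m * Real.cos ((n : ℕ) * α)) / 2) (fun α _ => this α)]
  rw [intervalIntegral.integral_div, intervalIntegral.integral_add (contInt m (n+2)) (contInt m n)]

lemma bCoef_succ_zero (m : ℕ) : bCoef (m+1) 0 = bCoef m 1 := by
  have : ∀ α : ℝ, (Real.cos α) ^ (m+1) * Real.cos ((0 : ℕ) * α)
      = (Real.cos α) ^ m * Real.cos ((1 : ℕ) * α) := by
    intro α
    push_cast
    simp [pow_succ]
  unfold bCoef
  exact intervalIntegral.integral_congr (fun α _ => this α)

lemma bCoef_closed (m : ℕ) :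
    (∀ n k, m = n + 2*k → bCoef m n = Real.pi * (m.choose k) / 2^m)
      ∧ (∀ n, (∀ k, m ≠ n + 2*k) → bCoef m n = 0) := by
  induction m with
  | zero =>
    constructor
    · intro n k h
      have hn : n = 0 := by omega
      have hk : k = 0 := by omega
      subst hn; subst hk
      simpa using bCoef_zero_zero
    · intro n h
      have hn : n ≠ 0 := by
        intro h0; exact h 0 (by omega)
      exact bCoef_zero n hn
  | succ m ih =>
    constructor
    · intro n k h
      match n, h with
      | 0, h =>
        obtain ⟨j, rfl⟩ : ∃ j, k = j + 1 := ⟨k - 1, by omega⟩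
        rw [bCoef_succ_zero, ih.1 1 j (by omega)]
        have hsym : m.choose (j+1) = m.choose j := by
          rw [← Nat.choose_symm (show j ≤ m by omega)]
          congr 1
          omega
        rw [Nat.choose_succ_succ, hsym, pow_succ]
        push_cast
        field_simp
        ring
      | n+1, h =>
        rw [bCoef_succ_succ m n]
        match k with
        | 0 =>
          have hmn : m = n := by omega
          rw [ih.2 (n+2) (by omega), ih.1 n 0 (by omega)]
          simp [pow_succ]; ring
        | j+1 =>
          rw [ih.1 (n+2) j (by omega), ih.1 n (j+1) (by omega), Nat.choose_succ_succ, pow_succ]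
          push_cast
          ring
    · intro n h
      match n with
      | 0 =>
        rw [bCoef_succ_zero]
        exact ih.2 1 (fun k hk => h (k+1) (by omega))
      | n+1 =>
        rw [bCoef_succ_succ, ih.2 (n+2) (fun k hk => h (k+1) (by omega)),
          ih.2 n (fun k hk => h k (by omega))]
        norm_num

-- bCoef_def bridge
lemma bCoef_def (m n : ℕ) : bCoef m n = ∫ α in (0:ℝ)..Real.pi, (Real.cos α) ^ m * Real.cos ((n : ℝ) * α) := rfl

lemma myexp (x : ℝ) : Real.exp x = ∑' m : ℕ, x ^ m / m.factorial := by
  rw [Real.exp_eq_exp_ℝ, NormedSpace.exp_eq_tsum_div]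

lemma besselI_nat_series (n : ℕ) (t : ℝ) :
    besselI (n : ℤ) t = ∑' k : ℕ, (t/2)^(n+2*k) / (k.factorial * (n+k).factorial) := by
  have h0π : (0:ℝ) ≤ Real.pi := Real.pi_pos.le
  set f : ℕ → ℝ → ℝ :=
    fun m α => (t^m / m.factorial) * ((Real.cos α)^m * Real.cos ((n:ℝ)*α)) with hf
  have hcont : ∀ m, Continuous (f m) := by
    intro m
    exact continuous_const.mul ((Real.continuous_cos.pow m).mul
      (Real.continuous_cos.comp (continuous_const.mul continuous_id)))
  have hint : ∀ m, Integrable (f m) (volume.restrict (Set.Ioc 0 Real.pi)) := by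
    intro m
    exact (hcont m).integrableOn_Ioc
  have hpt : ∀ α, Real.exp (t*Real.cos α) * Real.cos ((n:ℝ)*α) = ∑' m, f m α := by
    intro α
    rw [myexp (t*Real.cos α), ← tsum_mul_right]
    apply tsum_congr
    intro m
    rw [hf]
    simp only [mul_pow]
    ring
  have hbound : ∀ m, ∫ α in Set.Ioc (0:ℝ) Real.pi, ‖f m α‖ ≤ |t|^m / m.factorial * Real.pi := by
    intro m
    have hle : ∀ α ∈ Set.Ioc (0:ℝ) Real.pi, ‖f m α‖ ≤ |t|^m / m.factorial := by
      intro α _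
      rw [hf]
      simp only [Real.norm_eq_abs, abs_mul, abs_div, abs_pow]
      have h1 : |Real.cos α| ≤ 1 := Real.abs_cos_le_one α
      have h2 : |Real.cos ((n:ℝ)*α)| ≤ 1 := Real.abs_cos_le_one _
      have h3 : |(m.factorial : ℝ)| = (m.factorial : ℝ) := abs_of_pos (by positivity)
      rw [h3]
      calc |t|^m / m.factorial * (|Real.cos α|^m * |Real.cos ((n:ℝ)*α)|)
          ≤ |t|^m / m.factorial * (1^m * 1) := by
            gcongr
        _ = |t|^m / m.factorial := by ring
    calc (∫ α in Set.Ioc (0:ℝ) Real.pi, ‖f m α‖)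
        ≤ ∫ _α in Set.Ioc (0:ℝ) Real.pi, |t|^m / m.factorial :=
          setIntegral_mono_on (hint m).norm (integrableOn_const measure_Ioc_lt_top.ne)
            measurableSet_Ioc hle
      _ = |t|^m / m.factorial * Real.pi := by
          rw [setIntegral_const, Real.volume_real_Ioc_of_le h0π, smul_eq_mul]
          rw [sub_zero]
          ring
  have hsum : Summable fun m => ∫ α in Set.Ioc (0:ℝ) Real.pi, ‖f m α‖ := by
    apply Summable.of_nonneg_of_le
      (fun m => integral_nonneg (fun α => norm_nonneg _)) hbound
    exact (Real.summable_pow_div_factorial |t|).mul_right Real.pi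
  have hswap := MeasureTheory.integral_tsum_of_summable_integral_norm hint hsum
  have hIval : ∀ m, ∫ α in Set.Ioc (0:ℝ) Real.pi, f m α = (t^m/m.factorial) * bCoef m n := by
    intro m
    rw [hf]
    rw [MeasureTheory.integral_const_mul]
    rw [bCoef_def, intervalIntegral.integral_of_le h0π]
  have hmain : besselI (n : ℤ) t
      = ∑' m : ℕ, (1/Real.pi) * ((t^m/m.factorial) * bCoef m n) := by
    rw [besselI]
    push_cast
    rw [intervalIntegral.integral_of_le h0π]
    rw [show (fun α => Real.exp (t * Real.cos α) * Real.cos ((n:ℝ) * α)) = fun α => ∑' m, f m α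
      from funext hpt]
    rw [← hswap, ← tsum_mul_left]
    exact tsum_congr fun m => by rw [hIval m]
  rw [hmain]
  set F : ℕ → ℝ := fun m => (1/Real.pi) * ((t^m/m.factorial) * bCoef m n) with hF
  have hinj : Function.Injective (fun k : ℕ => n + 2*k) := by
    intro a b h
    simpa using (by omega : 2*a = 2*b → a = b) (by simpa using h)
  have hsupp : Function.support F ⊆ Set.range (fun k : ℕ => n + 2*k) := by
    intro m hm
    by_contra hr
    apply hm
    have hz : ∀ k, m ≠ n + 2*k := by
      intro k hk
      exact hr ⟨k, hk.symm⟩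
    rw [hF]
    simp [(bCoef_closed m).2 n hz]
  rw [← Function.Injective.tsum_eq hinj hsupp]
  apply tsum_congr
  intro k
  show F (n + 2*k) = (t/2)^(n+2*k) / (k.factorial * (n+k).factorial)
  have hval := (bCoef_closed (n+2*k)).1 n k rfl
  rw [hF]
  simp only []
  rw [hval]
  have hkey : (Nat.choose (n+2*k) k : ℝ) * ((k.factorial : ℝ) * ((n+k).factorial : ℝ))
      = ((n+2*k).factorial : ℝ) := by
    have h := Nat.choose_mul_factorial_mul_factorial (show k ≤ n+2*k by omega)
    rw [show n+2*k-k = n+k by omega] at h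
    exact_mod_cast by rw [← h]; ring
  have hπ : (Real.pi : ℝ) ≠ 0 := Real.pi_ne_zero
  have hfac1 : ((n+2*k).factorial : ℝ) ≠ 0 := by positivity
  have hfac2 : (k.factorial : ℝ) ≠ 0 := by positivity
  have hfac3 : (((n+k).factorial : ℝ)) ≠ 0 := by positivity
  rw [div_pow]
  field_simp
  linear_combination t ^ (n + 2*k) * hkey

lemma summable_bTerm (n : ℕ) (t : ℝ) :
    Summable (fun k : ℕ => (t/2)^(n+2*k) / (k.factorial * (n+k).factorial)) := by
  have hB : Summable (fun k : ℕ => (|t|/2)^n * (((|t|/2)^2)^k / k.factorial)) :=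
    (Real.summable_pow_div_factorial ((|t|/2)^2)).mul_left _
  refine Summable.of_norm (Summable.of_nonneg_of_le (fun k => norm_nonneg _) (fun k => ?_) hB)
  have h1 : ‖(t/2)^(n+2*k) / ((k.factorial : ℝ) * (n+k).factorial)‖
      = (|t|/2)^(n+2*k) / ((k.factorial : ℝ) * (n+k).factorial) := by
    rw [norm_div, norm_pow, Real.norm_eq_abs, Real.norm_eq_abs, abs_div]
    rw [abs_of_pos (by positivity : (0:ℝ) < (k.factorial : ℝ) * (n+k).factorial)]
    norm_num
  rw [h1]
  have hle : ((k.factorial : ℝ)) ≤ ((k.factorial : ℝ) * (n+k).factorial) := by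
    have h2 : (1:ℝ) ≤ ((n+k).factorial : ℝ) := by
      exact_mod_cast Nat.one_le_iff_ne_zero.mpr (Nat.factorial_ne_zero (n+k))
    have h3 : (0:ℝ) < (k.factorial : ℝ) := by positivity
    nlinarith
  calc (|t|/2)^(n+2*k) / ((k.factorial : ℝ) * (n+k).factorial)
      ≤ (|t|/2)^(n+2*k) / (k.factorial : ℝ) :=
        div_le_div_of_nonneg_left (by positivity) (by positivity) hle
    _ = (|t|/2)^n * (((|t|/2)^2)^k / k.factorial) := by
        rw [pow_add, pow_mul]; ring

lemma besselI_nat_nonneg (n : ℕ) (t : ℝ) (ht : 0 ≤ t) : 0 ≤ besselI (n : ℤ) t := by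
  rw [besselI_nat_series]
  exact tsum_nonneg fun k => by positivity

lemma besselI_nat_anti (n : ℕ) (t : ℝ) (ht : 0 ≤ t) :
    besselI ((n+1 : ℕ) : ℤ) t ≤ besselI ((n : ℕ) : ℤ) t := by
  rw [besselI_nat_series, besselI_nat_series]
  set x := t/2 with hx
  have hx0 : 0 ≤ x := by positivity
  set a : ℕ → ℝ := fun k => x^(n+2*k) / (k.factorial * (n+k).factorial) with ha
  set b : ℕ → ℝ := fun k => x^(n+1+2*k) / (k.factorial * (n+1+k).factorial) with hb
  have hsa : Summable a := summable_bTerm n t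
  have hsb : Summable b := summable_bTerm (n+1) t
  have hsa' : Summable (fun k => a (k+1)) := (summable_nat_add_iff 1).mpr hsa
  have hkey : ∀ k : ℕ, b k ≤ (a k + a (k+1)) / 2 := by
    intro k
    set K : ℝ := (k:ℝ) + 1 with hK
    set M : ℝ := (n:ℝ) + (k:ℝ) + 1 with hM
    have hKpos : 0 < K := by rw [hK]; positivity
    have hMpos : 0 < M := by rw [hM]; positivity
    have hKM : K ≤ M := by rw [hK, hM]; have : (0:ℝ) ≤ (n:ℝ) := Nat.cast_nonneg n; linarith
    have hF1 : (0:ℝ) < (k.factorial : ℝ) := by positivity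
    have hF2 : (0:ℝ) < ((n+k).factorial : ℝ) := by positivity
    have hfact1 : ((n+1+k).factorial : ℝ) = M * ((n+k).factorial : ℝ) := by
      rw [show n+1+k = (n+k)+1 by omega, Nat.factorial_succ, hM]
      push_cast; ring
    have hfact2 : (((k+1).factorial : ℕ) : ℝ) = K * (k.factorial : ℝ) := by
      rw [Nat.factorial_succ, hK]; push_cast; ring
    have hfact3 : ((n+(k+1)).factorial : ℝ) = M * ((n+k).factorial : ℝ) := by
      rw [show n+(k+1) = (n+k)+1 by omega, Nat.factorial_succ, hM]
      push_cast; ring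
    have e1 : b k = a k * (x/M) := by
      rw [hb, ha]
      simp only []
      rw [hfact1, show n+1+2*k = (n+2*k)+1 by omega, pow_succ]
      field_simp
    have e2 : a (k+1) = a k * (x^2/(K*M)) := by
      rw [ha]
      simp only []
      rw [hfact2, hfact3, show n+2*(k+1) = (n+2*k)+2 by omega, pow_add]
      field_simp
    have ha0 : 0 ≤ a k := by rw [ha]; positivity
    have hineq : x/M ≤ (1 + x^2/(K*M))/2 := by
      rw [← sub_nonneg]
      have hrw : (1 + x^2/(K*M))/2 - x/M = ((x-K)^2 + K*(M-K))/(2*K*M) := by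
        field_simp
        ring
      rw [hrw]
      have hnum : 0 ≤ (x-K)^2 + K*(M-K) :=
        add_nonneg (sq_nonneg _) (mul_nonneg hKpos.le (by linarith))
      positivity
    calc b k = a k * (x/M) := e1
      _ ≤ a k * ((1 + x^2/(K*M))/2) := mul_le_mul_of_nonneg_left hineq ha0
      _ = (a k + a k * (x^2/(K*M))) / 2 := by ring
      _ = (a k + a (k+1)) / 2 := by rw [e2]
  calc (∑' k, b k) ≤ ∑' k, (a k + a (k+1)) / 2 :=
        Summable.tsum_le_tsum hkey hsb ((hsa.add hsa').div_const 2)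
    _ = ((∑' k, a k) + ∑' k, a (k+1)) / 2 := by
        rw [tsum_div_const, Summable.tsum_add hsa hsa']
    _ ≤ ((∑' k, a k) + ∑' k, a k) / 2 := by
        have h2 : (∑' k, a (k+1)) ≤ ∑' k, a k := by
          apply Summable.tsum_le_tsum_of_inj (fun k => k + 1) (fun i j h => by simpa using h)
            (fun c _ => by rw [ha]; positivity) (fun k => le_rfl) hsa' hsa
        linarith
    _ = ∑' k, a k := by ring

lemma besselI_hasDerivAt (n : ℤ) (t : ℝ) :
    HasDerivAt (fun x => besselI n x) ((besselI (n-1) t + besselI (n+1) t) / 2) t := by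
  set F : ℝ → ℝ → ℝ := fun x α => Real.exp (x * Real.cos α) * Real.cos ((n:ℝ) * α) with hF
  set F' : ℝ → ℝ → ℝ :=
    fun x α => (Real.cos α * Real.exp (x * Real.cos α)) * Real.cos ((n:ℝ) * α) with hF'
  have hcF : ∀ x, Continuous (F x) := fun x =>
    (Real.continuous_exp.comp (continuous_const.mul Real.continuous_cos)).mul
      (Real.continuous_cos.comp (continuous_const.mul continuous_id))
  have hcF' : ∀ x, Continuous (F' x) := fun x =>
    ((Real.continuous_cos.mul
      (Real.continuous_exp.comp (continuous_const.mul Real.continuous_cos)))).mul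
      (Real.continuous_cos.comp (continuous_const.mul continuous_id))
  have key := (intervalIntegral.hasDerivAt_integral_of_dominated_loc_of_deriv_le
      (μ := volume) (a := (0:ℝ)) (b := Real.pi) (F := F) (F' := F')
      (bound := fun _ => Real.exp (|t|+1)) (x₀ := t) (Metric.ball_mem_nhds t zero_lt_one)
      (Filter.Eventually.of_forall fun x => (hcF x).aestronglyMeasurable)
      ((hcF t).intervalIntegrable 0 Real.pi)
      ((hcF' t).aestronglyMeasurable)
      (Filter.Eventually.of_forall ?_)
      (intervalIntegrable_const)
      (Filter.Eventually.of_forall ?_)).2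
  · -- massage the derivative value
    have hid : ∀ α : ℝ, F' t α
        = (Real.exp (t * Real.cos α) * Real.cos (((n-1 : ℤ):ℝ) * α)
          + Real.exp (t * Real.cos α) * Real.cos (((n+1 : ℤ):ℝ) * α)) / 2 := by
      intro α
      rw [hF']
      have h1 := Real.cos_sub ((n:ℝ) * α) α
      have h2 := Real.cos_add ((n:ℝ) * α) α
      have e1 : ((n-1 : ℤ):ℝ) * α = (n:ℝ) * α - α := by push_cast; ring
      have e2 : ((n+1 : ℤ):ℝ) * α = (n:ℝ) * α + α := by push_cast; ring
      rw [e1, e2, h1, h2]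
      ring
    have hval : (∫ α in (0:ℝ)..Real.pi, F' t α)
        = ((∫ α in (0:ℝ)..Real.pi, Real.exp (t * Real.cos α) * Real.cos (((n-1 : ℤ):ℝ) * α))
          + ∫ α in (0:ℝ)..Real.pi, Real.exp (t * Real.cos α) * Real.cos (((n+1 : ℤ):ℝ) * α)) / 2 := by
      rw [intervalIntegral.integral_congr (g := fun α =>
        (Real.exp (t * Real.cos α) * Real.cos (((n-1 : ℤ):ℝ) * α)
          + Real.exp (t * Real.cos α) * Real.cos (((n+1 : ℤ):ℝ) * α)) / 2)
        (fun α _ => hid α)]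
      rw [intervalIntegral.integral_div, intervalIntegral.integral_add]
      · exact ((Real.continuous_exp.comp (continuous_const.mul Real.continuous_cos)).mul
          (Real.continuous_cos.comp (continuous_const.mul continuous_id))).intervalIntegrable _ _
      · exact ((Real.continuous_exp.comp (continuous_const.mul Real.continuous_cos)).mul
          (Real.continuous_cos.comp (continuous_const.mul continuous_id))).intervalIntegrable _ _
    have hD := key.const_mul (1/Real.pi)
    have : HasDerivAt (fun x => besselI n x)
        ((1/Real.pi) * ∫ α in (0:ℝ)..Real.pi, F' t α) t := hD
    rw [hval] at this
    convert this using 1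
    rw [besselI, besselI]
    ring
  · -- bound
    intro α _ x hx
    have hxt : |x| ≤ |t| + 1 := by
      have hd : |x - t| < 1 := by
        simpa [Real.dist_eq] using Metric.mem_ball.mp hx
      calc |x| = |x - t + t| := by ring_nf
        _ ≤ |x - t| + |t| := abs_add_le _ _
        _ ≤ |t| + 1 := by linarith
    have h1 : ‖F' x α‖ ≤ Real.exp (x * Real.cos α) := by
      rw [hF']
      simp only [Real.norm_eq_abs, abs_mul, Real.abs_exp]
      have c1 := Real.abs_cos_le_one α
      have c2 := Real.abs_cos_le_one ((n:ℝ)*α)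
      have c1' := abs_nonneg (Real.cos α)
      have c2' := abs_nonneg (Real.cos ((n:ℝ)*α))
      have he : 0 < Real.exp (x*Real.cos α) := Real.exp_pos _
      have c3 : |Real.cos α| * |Real.cos ((n:ℝ)*α)| ≤ 1 := mul_le_one₀ c1 c2' c2
      nlinarith [mul_le_mul_of_nonneg_right c3 he.le]
    show ‖F' x α‖ ≤ Real.exp (|t|+1)
    refine h1.trans (Real.exp_le_exp.mpr ?_)
    calc x * Real.cos α ≤ |x * Real.cos α| := le_abs_self _
      _ = |x| * |Real.cos α| := abs_mul _ _
      _ ≤ (|t|+1) * 1 := by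
          have := Real.abs_cos_le_one α
          have h0 : (0:ℝ) ≤ |x| := abs_nonneg x
          nlinarith
      _ = |t| + 1 := by ring
  · -- differentiability
    intro α _ x _
    have h := (((hasDerivAt_id x).mul_const (Real.cos α)).exp).mul_const (Real.cos ((n:ℝ)*α))
    refine h.congr_deriv ?_
    rw [hF']
    simp only [id_eq]
    ring

/-- `∫_0^s I_n(t)² dt ≤ I_n(s)²` for `n ≥ 1` and `s > 0`. -/
theorem integral_besselI_sq_le_sq (n : ℤ) (hn : 1 ≤ n) (s : ℝ) (hs : 0 < s) :
    (∫ t in (0:ℝ)..s, (besselI n t) ^ 2) ≤ (besselI n s) ^ 2 := by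
  obtain ⟨N, rfl⟩ : ∃ N : ℕ, (N : ℤ) = n := ⟨n.toNat, Int.toNat_of_nonneg (by linarith)⟩
  have hN1 : 1 ≤ N := by exact_mod_cast hn
  obtain ⟨M, rfl⟩ : ∃ M : ℕ, M + 1 = N := ⟨N - 1, by omega⟩
  have hIcont : Continuous (fun x => besselI (M+1 : ℕ) x) :=
    continuous_iff_continuousAt.mpr fun x => (besselI_hasDerivAt _ x).continuousAt
  have hI2cont : Continuous (fun x => (besselI (M+1 : ℕ) x) ^ 2) := hIcont.pow 2
  set F : ℝ → ℝ :=
    fun u => (besselI (M+1 : ℕ) u) ^ 2 - ∫ t in (0:ℝ)..u, (besselI (M+1 : ℕ) t) ^ 2 with hFdef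
  have hder : ∀ u : ℝ, HasDerivAt F
      (2 * besselI (M+1 : ℕ) u ^ 1 *
        ((besselI ((M+1 : ℕ) - 1) u + besselI ((M+1 : ℕ) + 1) u) / 2)
        - (besselI (M+1 : ℕ) u) ^ 2) u := by
    intro u
    exact ((besselI_hasDerivAt (M+1 : ℕ) u).pow 2).sub
      ((hI2cont.integral_hasStrictDerivAt 0 u).hasDerivAt)
  have hmono : MonotoneOn F (Set.Icc 0 s) := by
    apply monotoneOn_of_deriv_nonneg (convex_Icc 0 s)
    · exact fun x _ => ((hder x).differentiableAt.continuousAt).continuousWithinAt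
    · intro x _
      exact ((hder x).differentiableAt).differentiableWithinAt
    · intro x hx
      rw [interior_Icc] at hx
      rw [(hder x).deriv]
      have hx0 : (0:ℝ) ≤ x := hx.1.le
      have h0 : 0 ≤ besselI (M+1 : ℕ) x := besselI_nat_nonneg (M+1) x hx0
      have hB : 0 ≤ besselI ((M+1 : ℕ) + 1) x := by
        have h := besselI_nat_nonneg (M+2) x hx0
        rwa [show ((M+2:ℕ) : ℤ) = ((M+1:ℕ) : ℤ) + 1 by push_cast; ring] at h
      have hA : besselI (M+1 : ℕ) x ≤ besselI ((M+1 : ℕ) - 1) x := by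
        have h := besselI_nat_anti M x hx0
        rw [show ((M+1:ℕ) : ℤ) - 1 = ((M:ℕ) : ℤ) by push_cast; ring]
        exact h
      set I := besselI (M+1 : ℕ) x
      set A := besselI ((M+1 : ℕ) - 1) x
      set B := besselI ((M+1 : ℕ) + 1) x
      have : 2 * I ^ 1 * ((A + B)/2) - I^2 = I*A + I*B - I^2 := by ring
      rw [this]
      nlinarith [mul_nonneg h0 hB, mul_le_mul_of_nonneg_left hA h0]
  have hF0 : F 0 ≤ F s :=
    hmono (Set.mem_Icc.mpr ⟨le_refl 0, hs.le⟩) (Set.mem_Icc.mpr ⟨hs.le, le_refl s⟩) hs.le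
  have hF0val : F 0 = (besselI (M+1 : ℕ) 0) ^ 2 := by
    rw [hFdef]
    simp [intervalIntegral.integral_same]
  have h0le : (besselI (M+1 : ℕ) 0) ^ 2 ≤ F s := by rw [← hF0val]; exact hF0
  have hFs : F s = (besselI (M+1 : ℕ) s) ^ 2 - ∫ t in (0:ℝ)..s, (besselI (M+1 : ℕ) t) ^ 2 := rfl
  rw [hFs] at h0le
  have := sq_nonneg (besselI (M+1 : ℕ) 0)
  linarith
end

section
/- For every s > 0, one has ∫_0^s t·I_0(t)² dt ≤ s·I_1(s)·I_0(s) ≤ s·I_0(s)². -/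
open MeasureTheory Real intervalIntegral

private noncomputable def gaux (k : ℕ) (t : ℝ) : ℝ :=
  ∫ α in (0:ℝ)..Real.pi, Real.exp (t * Real.cos α) * Real.cos α ^ k

private lemma gaux_cont_integrand (k : ℕ) (t : ℝ) :
    Continuous fun α : ℝ => Real.exp (t * Real.cos α) * Real.cos α ^ k :=
  ((Real.continuous_exp.comp (continuous_const.mul Real.continuous_cos)).mul
    (Real.continuous_cos.pow k))

private lemma gaux_hasDerivAt (k : ℕ) (t : ℝ) :
    HasDerivAt (gaux k) (gaux (k + 1) t) t := by
  have h := intervalIntegral.hasDerivAt_integral_of_dominated_loc_of_deriv_le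
    (F := fun x α => Real.exp (x * Real.cos α) * Real.cos α ^ k)
    (F' := fun x α => Real.exp (x * Real.cos α) * Real.cos α ^ (k + 1))
    (x₀ := t) (bound := fun _ => Real.exp (|t| + 1)) (μ := volume) (a := 0) (b := Real.pi)
    (Metric.ball_mem_nhds t one_pos) ?_ ?_ ?_ ?_ ?_ ?_
  · exact h.2
  · filter_upwards with x using ((gaux_cont_integrand k x).aestronglyMeasurable)
  · exact (gaux_cont_integrand k t).intervalIntegrable _ _
  · exact (gaux_cont_integrand (k + 1) t).aestronglyMeasurable
  · filter_upwards with α _ x hx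
    have hc : |Real.cos α| ≤ 1 := Real.abs_cos_le_one α
    have h1 : |Real.cos α ^ (k + 1)| ≤ 1 := by
      rw [abs_pow]; exact pow_le_one₀ (abs_nonneg _) hc
    have h2 : Real.exp (x * Real.cos α) ≤ Real.exp (|t| + 1) := by
      apply Real.exp_le_exp.2
      have : |x * Real.cos α| ≤ |x| := by
        rw [abs_mul]
        calc |x| * |Real.cos α| ≤ |x| * 1 := by
              exact mul_le_mul_of_nonneg_left hc (abs_nonneg _)
          _ = |x| := mul_one _
      have hx' : |x| ≤ |t| + 1 := by
        have := mem_ball_iff_norm.1 hx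
        calc |x| = |x - t + t| := by ring_nf
          _ ≤ |x - t| + |t| := abs_add_le _ _
          _ ≤ 1 + |t| := by
              have : |x - t| ≤ 1 := le_of_lt (by simpa [Real.norm_eq_abs] using this)
              linarith
          _ = |t| + 1 := by ring
      calc x * Real.cos α ≤ |x * Real.cos α| := le_abs_self _
        _ ≤ |x| := this
        _ ≤ |t| + 1 := hx'
    rw [Real.norm_eq_abs, abs_mul, abs_of_nonneg (Real.exp_pos _).le]
    calc Real.exp (x * Real.cos α) * |Real.cos α ^ (k + 1)|
        ≤ Real.exp (|t| + 1) * 1 := by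
          exact mul_le_mul h2 h1 (abs_nonneg _) (Real.exp_pos _).le
      _ = Real.exp (|t| + 1) := mul_one _
  · exact (continuous_const.intervalIntegrable _ _)
  · filter_upwards with α _ x _
    have h1 : HasDerivAt (fun x : ℝ => x * Real.cos α) (Real.cos α) x := by
      simpa using (hasDerivAt_id x).mul_const (Real.cos α)
    have h2 : HasDerivAt (fun x : ℝ => Real.exp (x * Real.cos α))
        (Real.exp (x * Real.cos α) * Real.cos α) x := h1.exp
    have := h2.mul_const (Real.cos α ^ k)
    refine this.congr_deriv ?_
    ring

/-- Integration by parts identity: `g₁ t + t * g₂ t = t * g₀ t`. -/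
private lemma gaux_parts (t : ℝ) : gaux 1 t + t * gaux 2 t = t * gaux 0 t := by
  have hu : ∀ x ∈ Set.uIcc (0:ℝ) Real.pi,
      HasDerivAt Real.sin (Real.cos x) x := fun x _ => Real.hasDerivAt_sin x
  have hv : ∀ x ∈ Set.uIcc (0:ℝ) Real.pi,
      HasDerivAt (fun α => Real.exp (t * Real.cos α))
        (Real.exp (t * Real.cos x) * (t * -Real.sin x)) x := by
    intro x _
    have h1 : HasDerivAt (fun α : ℝ => t * Real.cos α) (t * -Real.sin x) x :=
      (Real.hasDerivAt_cos x).const_mul t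
    exact h1.exp
  have hint : ∫ x in (0:ℝ)..Real.pi,
      (Real.cos x * Real.exp (t * Real.cos x) +
        Real.sin x * (Real.exp (t * Real.cos x) * (t * -Real.sin x))) =
      Real.sin Real.pi * Real.exp (t * Real.cos Real.pi) -
        Real.sin 0 * Real.exp (t * Real.cos 0) := by
    apply intervalIntegral.integral_deriv_mul_eq_sub hu hv
    · exact (Real.continuous_cos.intervalIntegrable _ _)
    · exact (((Real.continuous_exp.comp (continuous_const.mul Real.continuous_cos)).mul
        ((continuous_const.mul Real.continuous_sin.neg))).intervalIntegrable _ _)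
  rw [Real.sin_pi, Real.sin_zero, zero_mul, zero_mul, sub_zero] at hint
  have hrw : ∀ x : ℝ, Real.cos x * Real.exp (t * Real.cos x) +
      Real.sin x * (Real.exp (t * Real.cos x) * (t * -Real.sin x)) =
      Real.exp (t * Real.cos x) * Real.cos x ^ 1
        + t * (Real.exp (t * Real.cos x) * Real.cos x ^ 2)
        - t * (Real.exp (t * Real.cos x) * Real.cos x ^ 0) := by
    intro x
    have hs : Real.sin x ^ 2 = 1 - Real.cos x ^ 2 := Real.sin_sq x
    linear_combination (-(t * Real.exp (t * Real.cos x))) * hs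
  simp only [hrw] at hint
  have hi1 : IntervalIntegrable (fun α => Real.exp (t * Real.cos α) * Real.cos α ^ 1)
      volume 0 Real.pi := (gaux_cont_integrand 1 t).intervalIntegrable _ _
  have hi2 : IntervalIntegrable (fun α => t * (Real.exp (t * Real.cos α) * Real.cos α ^ 2))
      volume 0 Real.pi := (continuous_const.mul (gaux_cont_integrand 2 t)).intervalIntegrable _ _
  have hi0 : IntervalIntegrable (fun α => t * (Real.exp (t * Real.cos α) * Real.cos α ^ 0))
      volume 0 Real.pi := (continuous_const.mul (gaux_cont_integrand 0 t)).intervalIntegrable _ _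
  rw [intervalIntegral.integral_sub (hi1.add hi2) hi0,
    intervalIntegral.integral_add hi1 hi2,
    intervalIntegral.integral_const_mul, intervalIntegral.integral_const_mul] at hint
  have : gaux 1 t + t * gaux 2 t - t * gaux 0 t = 0 := hint
  linarith

private lemma gaux_continuous (k : ℕ) : Continuous (gaux k) :=
  continuous_iff_continuousAt.2 fun t => (gaux_hasDerivAt k t).continuousAt

private lemma H_hasDerivAt (t : ℝ) :
    HasDerivAt (fun t => t * gaux 1 t * gaux 0 t)
      (t * gaux 0 t ^ 2 + t * gaux 1 t ^ 2) t := by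
  have h := (((hasDerivAt_id t).mul (gaux_hasDerivAt 1 t)).mul (gaux_hasDerivAt 0 t))
  refine h.congr_deriv ?_
  show (1 * gaux 1 t + t * gaux 2 t) * gaux 0 t + t * gaux 1 t * gaux 1 t = _
  linear_combination (gaux 0 t) * gaux_parts t

private lemma besselI_zero_eq (t : ℝ) : besselI 0 t = (1 / Real.pi) * gaux 0 t := by
  unfold besselI gaux
  norm_num

private lemma besselI_one_eq (t : ℝ) : besselI 1 t = (1 / Real.pi) * gaux 1 t := by
  unfold besselI gaux
  norm_num

private lemma gaux_nonneg (k : ℕ) (t : ℝ) (hk : Even k) : 0 ≤ gaux k t := by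
  apply intervalIntegral.integral_nonneg Real.pi_pos.le
  intro α _
  exact mul_nonneg (Real.exp_pos _).le (hk.pow_nonneg _)

private lemma gaux_one_le_zero (t : ℝ) : gaux 1 t ≤ gaux 0 t := by
  apply intervalIntegral.integral_mono_on Real.pi_pos.le
    ((gaux_cont_integrand 1 t).intervalIntegrable _ _)
    ((gaux_cont_integrand 0 t).intervalIntegrable _ _)
  intro α _
  simp only [pow_one, pow_zero, mul_one]
  calc Real.exp (t * Real.cos α) * Real.cos α
      ≤ Real.exp (t * Real.cos α) * 1 :=
        mul_le_mul_of_nonneg_left (Real.cos_le_one α) (Real.exp_pos _).le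
    _ = Real.exp (t * Real.cos α) := mul_one _

/-- `∫_0^s t·I_0(t)² dt ≤ s·I_1(s)·I_0(s) ≤ s·I_0(s)²` for `s > 0`. -/
theorem integral_mul_besselI_zero_sq_le (s : ℝ) (hs : 0 < s) :
    (∫ t in (0:ℝ)..s, t * (besselI 0 t) ^ 2) ≤ s * besselI 1 s * besselI 0 s ∧
    s * besselI 1 s * besselI 0 s ≤ s * (besselI 0 s) ^ 2 := by
  have hπ : (0:ℝ) < Real.pi := Real.pi_pos
  have hcont0 := gaux_continuous 0
  have hcont1 := gaux_continuous 1
  have hderivcont : Continuous fun t => t * gaux 0 t ^ 2 + t * gaux 1 t ^ 2 :=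
    (continuous_id.mul (hcont0.pow 2)).add (continuous_id.mul (hcont1.pow 2))
  have hftc : ∫ t in (0:ℝ)..s, (t * gaux 0 t ^ 2 + t * gaux 1 t ^ 2) =
      s * gaux 1 s * gaux 0 s - 0 * gaux 1 0 * gaux 0 0 :=
    intervalIntegral.integral_eq_sub_of_hasDerivAt (fun t _ => H_hasDerivAt t)
      (hderivcont.intervalIntegrable _ _)
  rw [zero_mul, zero_mul, sub_zero] at hftc
  have hmono : ∫ t in (0:ℝ)..s, t * gaux 0 t ^ 2 ≤
      ∫ t in (0:ℝ)..s, (t * gaux 0 t ^ 2 + t * gaux 1 t ^ 2) := by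
    apply intervalIntegral.integral_mono_on hs.le
      ((continuous_id.mul (hcont0.pow 2)).intervalIntegrable _ _)
      (hderivcont.intervalIntegrable _ _)
    intro t ht
    simp only [Pi.mul_apply, Pi.pow_apply, id_eq]
    nlinarith [mul_nonneg ht.1 (sq_nonneg (gaux 1 t))]
  have hineq1 : ∫ t in (0:ℝ)..s, t * gaux 0 t ^ 2 ≤ s * gaux 1 s * gaux 0 s := by
    rw [← hftc]; exact hmono
  have hc : (0:ℝ) ≤ (1 / Real.pi) ^ 2 := sq_nonneg _
  constructor
  · have hrw : ∀ t : ℝ, t * besselI 0 t ^ 2 = (1 / Real.pi) ^ 2 * (t * gaux 0 t ^ 2) := by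
      intro t; rw [besselI_zero_eq]; ring
    rw [intervalIntegral.integral_congr (fun t _ => hrw t),
      intervalIntegral.integral_const_mul, besselI_one_eq, besselI_zero_eq]
    calc (1 / Real.pi) ^ 2 * ∫ t in (0:ℝ)..s, t * gaux 0 t ^ 2
        ≤ (1 / Real.pi) ^ 2 * (s * gaux 1 s * gaux 0 s) :=
          mul_le_mul_of_nonneg_left hineq1 hc
      _ = s * (1 / Real.pi * gaux 1 s) * (1 / Real.pi * gaux 0 s) := by ring
  · rw [besselI_one_eq, besselI_zero_eq]
    have h1 := gaux_one_le_zero s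
    have h0 := gaux_nonneg 0 s (Even.zero)
    have hπ' : 0 ≤ 1 / Real.pi := by positivity
    have hcoef : 0 ≤ s * (1 / Real.pi) * (1 / Real.pi) :=
      mul_nonneg (mul_nonneg hs.le hπ') hπ'
    calc s * (1 / Real.pi * gaux 1 s) * (1 / Real.pi * gaux 0 s)
        = (s * (1 / Real.pi) * (1 / Real.pi)) * (gaux 1 s * gaux 0 s) := by ring
      _ ≤ (s * (1 / Real.pi) * (1 / Real.pi)) * (gaux 0 s * gaux 0 s) :=
          mul_le_mul_of_nonneg_left (mul_le_mul_of_nonneg_right h1 h0) hcoef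
      _ = s * (1 / Real.pi * gaux 0 s) ^ 2 := by ring
end

section
/- For every integer n ≥ 0 and all real numbers 0 < t ≤ M, one has ∫_t^M s·K_{n+1}(s) ds ≤ 2·t·K_n(t) + 4·K_n(t). -/
open MeasureTheory Real intervalIntegral

section auxbessel


lemma cosh_quad (α : ℝ) : 1 + α ^ 2 / 2 ≤ Real.cosh α := by
  have h : Real.cosh α = 1 + 2 * Real.sinh (α / 2) ^ 2 := by
    have h1 := Real.cosh_two_mul (α / 2)
    have h2 := Real.cosh_sq (α / 2)
    rw [show 2 * (α / 2) = α by ring] at h1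
    rw [h1, h2]; ring
  have hs : |α / 2| ≤ |Real.sinh (α / 2)| := by
    rw [Real.abs_sinh]
    exact Real.self_le_sinh_iff.2 (abs_nonneg _)
  have : (α / 2) ^ 2 ≤ Real.sinh (α / 2) ^ 2 := by
    rw [← sq_abs (α/2), ← sq_abs (Real.sinh _)]
    exact pow_le_pow_left₀ (abs_nonneg _) hs 2
  nlinarith

lemma cosh_le_exp' {x : ℝ} (hx : 0 ≤ x) : Real.cosh x ≤ Real.exp x := by
  have := Real.cosh_add_sinh x
  have := Real.sinh_nonneg_iff.2 hx
  linarith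

lemma integrable_besselK_integrand (c t : ℝ) (hc : 0 ≤ c) (ht : 0 < t) :
    IntegrableOn (fun α => Real.exp (-t * Real.cosh α) * Real.cosh (c * α)) (Set.Ioi 0) := by
  have hg : Integrable (fun α : ℝ =>
      (Real.exp (-t) * Real.exp (c ^ 2 / (2 * t))) * Real.exp (-(t/2) * (α - c/t) ^ 2)) := by
    exact ((integrable_exp_neg_mul_sq (half_pos ht)).comp_sub_right (c/t)).const_mul _
  apply (hg.integrableOn).mono' ((Continuous.aestronglyMeasurable (by continuity)))
  filter_upwards [ae_restrict_mem measurableSet_Ioi] with α (hα : 0 < α)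
  have h1 : 0 ≤ Real.exp (-t * Real.cosh α) * Real.cosh (c * α) :=
    mul_nonneg (Real.exp_pos _).le (Real.cosh_pos _).le
  rw [Real.norm_eq_abs, abs_of_nonneg h1]
  have h2 : Real.cosh (c * α) ≤ Real.exp (c * α) := cosh_le_exp' (mul_nonneg hc hα.le)
  have h3 : Real.exp (-t * Real.cosh α) ≤ Real.exp (-t * (1 + α ^ 2 / 2)) := by
    apply Real.exp_le_exp.2
    have := cosh_quad α
    nlinarith
  calc Real.exp (-t * Real.cosh α) * Real.cosh (c * α)
      ≤ Real.exp (-t * (1 + α ^ 2 / 2)) * Real.exp (c * α) := by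
        apply mul_le_mul h3 h2 (Real.cosh_pos _).le (Real.exp_pos _).le
    _ = (Real.exp (-t) * Real.exp (c ^ 2 / (2 * t))) * Real.exp (-(t/2) * (α - c/t) ^ 2) := by
        rw [← Real.exp_add, ← Real.exp_add, ← Real.exp_add]
        congr 1
        field_simp
        ring

lemma integral_mul_exp_le (t M b : ℝ) (ht : 0 < t) (htM : t ≤ M) (hb : 1 ≤ b) :
    ∫ s in Set.Ioc t M, s * Real.exp (-s * b) ≤ (t + 1) / b * Real.exp (-t * b) := by
  have hb0 : 0 < b := lt_of_lt_of_le one_pos hb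
  have hderiv : ∀ s ∈ Set.uIcc t M, HasDerivAt (fun s => -((s * b + 1) / b ^ 2) * Real.exp (-s * b))
      (s * Real.exp (-s * b)) s := by
    intro s _
    have h1 : HasDerivAt (fun s : ℝ => -((s * b + 1) / b ^ 2)) (-(b / b ^ 2)) s := by
      simpa [Pi.neg_def] using (((hasDerivAt_id s).mul_const b).add_const 1).div_const (b ^ 2) |>.neg
    have h2 : HasDerivAt (fun s : ℝ => Real.exp (-s * b)) (-b * Real.exp (-s * b)) s := by
      have h3 : HasDerivAt (fun s : ℝ => -s * b) (-b) s := by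
        simpa using ((hasDerivAt_id s).neg.mul_const b)
      simpa [mul_comm, Function.comp_def] using (Real.hasDerivAt_exp (-s * b)).comp s h3
    have := h1.fun_mul h2
    refine this.congr_deriv ?_
    have hbb : b * b⁻¹ = 1 := mul_inv_cancel₀ hb0.ne'
    linear_combination ((s * Real.exp (-s * b)) * (1 + b * b⁻¹)) * hbb
  have hint : IntervalIntegrable (fun s => s * Real.exp (-s * b)) volume t M :=
    Continuous.intervalIntegrable (by continuity) t M
  have heq := intervalIntegral.integral_eq_sub_of_hasDerivAt hderiv hint
  rw [← intervalIntegral.integral_of_le htM, heq]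
  have hM0 : 0 < M := lt_of_lt_of_le ht htM
  have hMnn : 0 ≤ (M * b + 1) / b ^ 2 * Real.exp (-M * b) := by positivity
  have hle : (t * b + 1) / b ^ 2 ≤ (t + 1) / b := by
    rw [div_le_div_iff₀ (by positivity) hb0]
    nlinarith
  have := mul_le_mul_of_nonneg_right hle (Real.exp_pos (-t * b)).le
  nlinarith [Real.exp_pos (-t * b), Real.exp_pos (-M * b)]

lemma cosh_succ_le (c α : ℝ) (hc : 0 ≤ c) (hα : 0 ≤ α) :
    Real.cosh ((c + 1) * α) ≤ 2 * Real.cosh α * Real.cosh (c * α) := by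
  have h : (c + 1) * α = c * α + α := by ring
  rw [h, Real.cosh_add]
  have h1 : Real.sinh (c * α) ≤ Real.cosh (c * α) := (Real.sinh_lt_cosh _).le
  have h2 : Real.sinh α ≤ Real.cosh α := (Real.sinh_lt_cosh _).le
  have h3 : 0 ≤ Real.sinh (c * α) := Real.sinh_nonneg_iff.2 (mul_nonneg hc hα)
  have h4 : 0 ≤ Real.sinh α := Real.sinh_nonneg_iff.2 hα
  nlinarith [Real.cosh_pos α, Real.cosh_pos (c * α)]

end auxbessel

/-- `∫_t^M s·K_{n+1}(s) ds ≤ 2·t·K_n(t) + 4·K_n(t)` for `n ≥ 0` and `0 < t ≤ M`. -/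
theorem integral_mul_besselK_le (n : ℤ) (hn : 0 ≤ n) (t M : ℝ) (ht : 0 < t) (htM : t ≤ M) :
    (∫ s in t..M, s * besselK (n + 1) s) ≤ 2 * t * besselK n t + 4 * besselK n t := by
  set c : ℝ := (n : ℝ) with hcdef
  have hc : 0 ≤ c := by rw [hcdef]; exact_mod_cast hn
  have hn1 : ((n + 1 : ℤ) : ℝ) = c + 1 := by push_cast; ring
  set F : ℝ → ℝ → ℝ :=
    fun s α => s * (Real.exp (-s * Real.cosh α) * Real.cosh ((c + 1) * α)) with hFdef
  have hKnonneg : 0 ≤ besselK n t := by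
    apply setIntegral_nonneg measurableSet_Ioi
    intro α _
    exact mul_nonneg (Real.exp_pos _).le (Real.cosh_pos _).le
  have hbk : ∀ s : ℝ, s * besselK (n + 1) s = ∫ α in Set.Ioi (0:ℝ), F s α := by
    intro s
    rw [besselK, hn1, ← MeasureTheory.integral_const_mul]
  have hLHS : (∫ s in t..M, s * besselK (n + 1) s)
      = ∫ s in Set.Ioc t M, ∫ α in Set.Ioi (0:ℝ), F s α := by
    rw [intervalIntegral.integral_of_le htM]
    exact MeasureTheory.integral_congr_ae (Filter.Eventually.of_forall fun s => hbk s)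
  have hprod : Integrable (Function.uncurry F)
      ((volume.restrict (Set.Ioc t M)).prod (volume.restrict (Set.Ioi 0))) := by
    apply Integrable.mono'
      (g := fun p : ℝ × ℝ => M * (Real.exp (-t * Real.cosh p.2) * Real.cosh ((c + 1) * p.2)))
    · exact Integrable.mul_prod
        (integrableOn_const measure_Ioc_lt_top.ne : IntegrableOn (fun _ => M) (Set.Ioc t M) volume)
        (integrable_besselK_integrand (c + 1) t (by linarith) ht)
    · apply Continuous.aestronglyMeasurable
      simp only [hFdef, Function.uncurry]
      fun_prop
    · rw [Measure.prod_restrict]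
      filter_upwards [ae_restrict_mem (measurableSet_Ioc.prod measurableSet_Ioi)] with p hp
      obtain ⟨hp1, hp2⟩ := hp
      have hs0 : 0 < p.1 := lt_trans ht hp1.1
      have hnn : 0 ≤ Function.uncurry F p :=
        mul_nonneg hs0.le (mul_nonneg (Real.exp_pos _).le (Real.cosh_pos _).le)
      rw [Real.norm_eq_abs, abs_of_nonneg hnn]
      have hexp : Real.exp (-p.1 * Real.cosh p.2) ≤ Real.exp (-t * Real.cosh p.2) := by
        apply Real.exp_le_exp.2
        have := Real.cosh_pos p.2
        nlinarith [hp1.1.le]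
      calc Function.uncurry F p
          = p.1 * (Real.exp (-p.1 * Real.cosh p.2) * Real.cosh ((c + 1) * p.2)) := rfl
        _ ≤ M * (Real.exp (-t * Real.cosh p.2) * Real.cosh ((c + 1) * p.2)) := by
            apply mul_le_mul (le_trans hp1.2 le_rfl)
              (mul_le_mul_of_nonneg_right hexp (Real.cosh_pos _).le)
              (mul_nonneg (Real.exp_pos _).le (Real.cosh_pos _).le)
              (le_trans hs0.le (le_trans hp1.2 le_rfl))
  calc (∫ s in t..M, s * besselK (n + 1) s)
      = ∫ α in Set.Ioi (0:ℝ), ∫ s in Set.Ioc t M, F s α := by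
        rw [hLHS]; exact MeasureTheory.integral_integral_swap hprod
    _ ≤ ∫ α in Set.Ioi (0:ℝ),
          (2 * (t + 1)) * (Real.exp (-t * Real.cosh α) * Real.cosh (c * α)) := by
        apply integral_mono_of_nonneg
        · apply Filter.Eventually.of_forall
          intro α
          apply setIntegral_nonneg measurableSet_Ioc
          intro s hs
          exact mul_nonneg (le_of_lt (lt_trans ht hs.1))
            (mul_nonneg (Real.exp_pos _).le (Real.cosh_pos _).le)
        · exact (integrable_besselK_integrand c t hc ht).const_mul _
        · filter_upwards [ae_restrict_mem measurableSet_Ioi] with α (hα : 0 < α)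
          set b : ℝ := Real.cosh α with hbdef
          have hb : 1 ≤ b := Real.one_le_cosh α
          have hb0 : 0 < b := lt_of_lt_of_le one_pos hb
          have hre : (∫ s in Set.Ioc t M, F s α)
              = (∫ s in Set.Ioc t M, s * Real.exp (-s * b)) * Real.cosh ((c + 1) * α) := by
            rw [← MeasureTheory.integral_mul_const]
            apply MeasureTheory.integral_congr_ae
            apply Filter.Eventually.of_forall
            intro s
            simp only [hFdef]
            ring
          rw [hre]
          calc (∫ s in Set.Ioc t M, s * Real.exp (-s * b)) * Real.cosh ((c + 1) * α)
              ≤ ((t + 1) / b * Real.exp (-t * b)) * Real.cosh ((c + 1) * α) :=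
                mul_le_mul_of_nonneg_right (integral_mul_exp_le t M b ht htM hb)
                  (Real.cosh_pos _).le
            _ ≤ ((t + 1) / b * Real.exp (-t * b)) * (2 * b * Real.cosh (c * α)) := by
                apply mul_le_mul_of_nonneg_left _ (by positivity)
                have := cosh_succ_le c α hc hα.le
                calc Real.cosh ((c + 1) * α) ≤ 2 * Real.cosh α * Real.cosh (c * α) := this
                  _ = 2 * b * Real.cosh (c * α) := by rw [hbdef]
            _ = (2 * (t + 1)) * (Real.exp (-t * b) * Real.cosh (c * α)) := by
                field_simp
    _ = (2 * (t + 1)) * besselK n t := by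
        rw [besselK, MeasureTheory.integral_const_mul]
    _ ≤ 2 * t * besselK n t + 4 * besselK n t := by nlinarith
end

section
/- The function t ↦ I_0(t)·∫_t^∞ s·K_1(s) ds is bounded on (0, ∞), and its limit as t → ∞ equals 1/2. -/
open MeasureTheory Real intervalIntegral

open MeasureTheory Real Set Filter intervalIntegral

lemma sinh_le_mul_cosh {x : ℝ} (hx : 0 ≤ x) : Real.sinh x ≤ x * Real.cosh x := by
  have h : MonotoneOn (fun y => y * Real.cosh y - Real.sinh y) (Set.Ici 0) := by
    apply monotoneOn_of_deriv_nonneg (convex_Ici 0) (by fun_prop) (by fun_prop)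
    intro y hy
    rw [interior_Ici] at hy
    have hd : HasDerivAt (fun y => y * Real.cosh y - Real.sinh y) (y * Real.sinh y) y := by
      have h1 := (hasDerivAt_id y).mul (Real.hasDerivAt_cosh y)
      have h2 := Real.hasDerivAt_sinh y
      exact (h1.sub h2).congr_deriv (by simp only [one_mul, id]; ring)
    rw [hd.deriv]
    exact mul_nonneg (le_of_lt hy) (by rw [← Real.sinh_zero]; exact Real.sinh_le_sinh.2 (le_of_lt hy))
  have := h (Set.self_mem_Ici) (Set.mem_Ici.2 hx) hx
  simpa using this

lemma cosh_sub_one_le {β : ℝ} (hβ : 0 ≤ β) : Real.cosh β - 1 ≤ β^2/2 * Real.cosh β := by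
  have h2 : Real.cosh β = 1 + 2 * Real.sinh (β/2)^2 := by
    have := Real.cosh_two_mul (β/2); have := Real.cosh_sq (β/2)
    rw [show 2*(β/2) = β by ring] at *; linarith
  have hs : Real.sinh (β/2) ≤ β/2 * Real.cosh (β/2) := sinh_le_mul_cosh (by linarith)
  have hs0 : 0 ≤ Real.sinh (β/2) := by rw [← Real.sinh_zero]; exact Real.sinh_le_sinh.2 (by linarith)
  have hc2 : Real.cosh (β/2)^2 = (Real.cosh β + 1)/2 := by
    have := Real.cosh_two_mul (β/2); have := Real.cosh_sq (β/2)
    rw [show 2*(β/2) = β by ring] at *; linarith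
  have h1 : 1 ≤ Real.cosh β := Real.one_le_cosh β
  nlinarith [sq_nonneg (Real.sinh (β/2)), sq_nonneg (β/2)]

lemma one_sub_cos_ge {δ α : ℝ} (hδ : δ ≤ π/2) (h0 : 0 ≤ α) (hαδ : α ≤ δ) :
    Real.cos δ * (α^2/2) ≤ 1 - Real.cos α := by
  have hδ0 : 0 ≤ δ := le_trans h0 hαδ
  have hsin : α/2 * Real.cos (α/2) ≤ Real.sin (α/2) := by
    rcases eq_or_lt_of_le h0 with h | h
    · simp [← h]
    · have ht : α/2 < π/2 := by nlinarith [Real.pi_gt_three]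
      have := Real.lt_tan (by linarith) ht
      have hc : 0 < Real.cos (α/2) := Real.cos_pos_of_mem_Ioo ⟨by linarith, ht⟩
      rw [Real.tan_eq_sin_div_cos, lt_div_iff₀ hc] at this
      linarith
  have hcos : Real.cos (δ/2) ≤ Real.cos (α/2) := by
    apply Real.cos_le_cos_of_nonneg_of_le_pi (by linarith) (by nlinarith [Real.pi_pos]) (by linarith)
  have h1 : 1 - Real.cos α = 2 * Real.sin (α/2)^2 := by
    have := Real.cos_two_mul (α/2); have := Real.sin_sq_add_cos_sq (α/2)
    rw [show 2*(α/2) = α by ring] at *; linarith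
  have hc2 : Real.cos (δ/2)^2 = (1 + Real.cos δ)/2 := by
    have := Real.cos_two_mul (δ/2)
    rw [show 2*(δ/2) = δ by ring] at *; linarith
  have hcd : Real.cos δ ≤ 1 := Real.cos_le_one δ
  have hcd0 : 0 ≤ Real.cos δ := Real.cos_nonneg_of_mem_Icc ⟨by linarith, hδ⟩
  have hca : 0 ≤ Real.cos (α/2) := by
    apply Real.cos_nonneg_of_mem_Icc; constructor <;> nlinarith [Real.pi_gt_three]
  have hs0 : 0 ≤ Real.sin (α/2) := Real.sin_nonneg_of_nonneg_of_le_pi (by linarith) (by nlinarith [Real.pi_gt_three])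
  have hcd2 : 0 ≤ Real.cos (δ/2) := by
    apply Real.cos_nonneg_of_mem_Icc; constructor <;> nlinarith [Real.pi_gt_three]
  nlinarith [mul_le_mul hsin hsin (by positivity) hs0, mul_self_le_mul_self hcd2 hcos]

lemma tendsto_sqrt_atTop' : Tendsto Real.sqrt atTop atTop := by
  apply tendsto_atTop_atTop_of_monotone (fun x y h => Real.sqrt_le_sqrt h)
  intro b
  exact ⟨b^2, by rw [Real.sqrt_sq_eq_abs]; exact le_abs_self b⟩

lemma hasDerivAt_aux {c : ℝ} (hc : 0 < c) (s : ℝ) :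
    HasDerivAt (fun s => -((s/c + 1/c^2) * Real.exp (-(c*s)))) (s * Real.exp (-(c*s))) s := by
  have h1 : HasDerivAt (fun s : ℝ => s/c + 1/c^2) (1/c) s :=
    ((hasDerivAt_id s).div_const c).add_const _
  have h0 : HasDerivAt (fun s : ℝ => -(c*s)) (-c) s := by
    exact (((hasDerivAt_id s).const_mul c).neg).congr_deriv (by simp)
  have h2 : HasDerivAt (fun s : ℝ => Real.exp (-(c*s))) (Real.exp (-(c*s)) * (-c)) s := h0.exp
  have := (h1.mul h2).neg
  refine this.congr_deriv ?_
  field_simp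
  ring

lemma tendsto_aux {c : ℝ} (hc : 0 < c) :
    Tendsto (fun s => -((s/c + 1/c^2) * Real.exp (-(c*s)))) atTop (nhds 0) := by
  have h1 : Tendsto (fun s : ℝ => c * s) atTop atTop :=
    Tendsto.const_mul_atTop hc tendsto_id
  have h2 : Tendsto (fun x : ℝ => x * Real.exp (-x)) atTop (nhds 0) := by
    simpa using Real.tendsto_pow_mul_exp_neg_atTop_nhds_zero 1
  have h3 : Tendsto (fun s : ℝ => (c*s) * Real.exp (-(c*s))) atTop (nhds 0) := h2.comp h1
  have h4 : Tendsto (fun s : ℝ => Real.exp (-(c*s))) atTop (nhds 0) :=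
    Real.tendsto_exp_neg_atTop_nhds_zero.comp h1
  have := ((h3.const_mul (1/c^2)).add (h4.const_mul (1/c^2))).neg
  simp only [mul_zero, add_zero, neg_zero, zero_add] at this
  apply this.congr
  intro s; field_simp

lemma integrableOn_mul_exp {c t : ℝ} (hc : 0 < c) (ht : 0 ≤ t) :
    IntegrableOn (fun s => s * Real.exp (-(c*s))) (Ioi t) := by
  apply integrableOn_Ioi_deriv_of_nonneg' (g := fun s => -((s/c + 1/c^2) * Real.exp (-(c*s))))
    (fun x _ => hasDerivAt_aux hc x) _ (tendsto_aux hc)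
  intro x hx
  have : 0 < x := lt_of_le_of_lt ht hx
  positivity

lemma integral_mul_exp {c t : ℝ} (hc : 0 < c) (ht : 0 ≤ t) :
    ∫ s in Ioi t, s * Real.exp (-(c*s)) = (t/c + 1/c^2) * Real.exp (-(c*t)) := by
  rw [integral_Ioi_of_hasDerivAt_of_nonneg' (fun x _ => hasDerivAt_aux hc x)
    (fun x hx => by have : 0 < x := lt_of_le_of_lt ht hx; positivity) (tendsto_aux hc)]
  ring

lemma gauss_eq_Ioi {a t : ℝ} (ha : 0 < a) (ht : 0 < t) :
    Real.sqrt t * ∫ x in Ioi (0:ℝ), Real.exp (-(t*a*x^2)) = Real.sqrt (π/a)/2 := by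
  have h : ∫ x in Ioi (0:ℝ), Real.exp (-(t*a*x^2)) = Real.sqrt (π/(t*a))/2 := by
    rw [← integral_gaussian_Ioi (t*a)]
    congr 1; ext x; ring_nf
  rw [h, show π/(t*a) = (π/a)/t by ring, Real.sqrt_div' _ ht.le]
  have hst : Real.sqrt t ≠ 0 := by positivity
  field_simp

lemma gauss_tendsto_finite {a δ : ℝ} (ha : 0 < a) (hδ : 0 < δ) :
    Tendsto (fun t : ℝ => Real.sqrt t * ∫ x in (0:ℝ)..δ, Real.exp (-(t*a*x^2))) atTop
      (nhds (Real.sqrt (π/a)/2)) := by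
  have key : ∀ t : ℝ, 0 < t →
      Real.sqrt t * ∫ x in (0:ℝ)..δ, Real.exp (-(t*a*x^2))
        = (1/Real.sqrt a) * ∫ y in (0:ℝ)..(Real.sqrt (t*a) * δ), Real.exp (-(y^2)) := by
    intro t ht
    have hta : (0:ℝ) < t*a := by positivity
    have hc : Real.sqrt (t*a) ≠ 0 := by positivity
    have hstep : (∫ x in (0:ℝ)..δ, Real.exp (-(t*a*x^2)))
        = ∫ x in (0:ℝ)..δ, (fun y => Real.exp (-(y^2))) (Real.sqrt (t*a) * x) := by
      apply intervalIntegral.integral_congr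
      intro x _
      simp only []
      rw [mul_pow, Real.sq_sqrt hta.le]
    rw [hstep, intervalIntegral.integral_comp_mul_left (fun y => Real.exp (-(y^2))) hc]
    rw [mul_zero, smul_eq_mul, Real.sqrt_mul ht.le]
    have hsa : Real.sqrt a ≠ 0 := by positivity
    have hst : Real.sqrt t ≠ 0 := by positivity
    field_simp
  have h2 : Tendsto (fun t : ℝ => Real.sqrt (t*a) * δ) atTop atTop := by
    apply Tendsto.atTop_mul_const hδ
    exact tendsto_sqrt_atTop'.comp (Tendsto.atTop_mul_const ha tendsto_id)
  have h3 : Tendsto (fun t : ℝ => ∫ y in (0:ℝ)..(Real.sqrt (t*a) * δ), Real.exp (-(y^2))) atTop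
      (nhds (∫ y in Ioi (0:ℝ), Real.exp (-(y^2)))) := by
    apply intervalIntegral_tendsto_integral_Ioi _ _ h2
    have := (integrable_exp_neg_mul_sq (one_pos)).integrableOn (s := Ioi (0:ℝ))
    apply this.congr_fun _ measurableSet_Ioi
    intro x _; norm_num
  have h4 : ∫ y in Ioi (0:ℝ), Real.exp (-(y^2)) = Real.sqrt π / 2 := by
    simpa using integral_gaussian_Ioi 1
  rw [h4] at h3
  have h5 := h3.const_mul (1/Real.sqrt a)
  have heq : Real.sqrt (π/a)/2 = 1/Real.sqrt a * (Real.sqrt π/2) := by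
    rw [Real.sqrt_div Real.pi_pos.le]
    field_simp
  rw [heq]
  apply Tendsto.congr' _ h5
  filter_upwards [eventually_gt_atTop 0] with t ht
  exact (key t ht).symm


noncomputable def B0 (t : ℝ) : ℝ := ∫ β in Set.Ioi (0:ℝ), Real.exp (-(t * Real.cosh β))
noncomputable def E0 (t : ℝ) : ℝ :=
  ∫ β in Set.Ioi (0:ℝ), Real.exp (-(t * Real.cosh β)) * (Real.cosh β)⁻¹

lemma besselK_one (s : ℝ) :
    besselK 1 s = ∫ α in Set.Ioi (0:ℝ), Real.exp (-(s * Real.cosh α)) * Real.cosh α := by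
  unfold besselK
  norm_num [neg_mul]

lemma integrableOn_exp_cosh {t : ℝ} (ht : 0 < t) {g : ℝ → ℝ} (hg : Continuous g)
    (h0 : ∀ α, 0 ≤ g α) (h1 : ∀ α, 0 ≤ α → g α ≤ Real.cosh α) :
    IntegrableOn (fun α => Real.exp (-(t * Real.cosh α)) * g α) (Set.Ioi 0) := by
  have hd : IntegrableOn (fun α => Real.exp α * Real.exp (-(t/2 * Real.exp α))) (Set.Ioi 0) := by
    apply integrableOn_Ioi_deriv_of_nonneg'
      (g := fun α => -(2/t) * Real.exp (-(t/2 * Real.exp α))) (l := 0)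
    · intro x _
      have hin : HasDerivAt (fun x : ℝ => -(t/2 * Real.exp x)) (-(t/2 * Real.exp x)) x := by
        exact ((Real.hasDerivAt_exp x).const_mul (t/2)).neg
      have := (hin.exp).const_mul (-(2/t))
      refine this.congr_deriv ?_
      field_simp
    · intro x _; positivity
    · have h1' : Tendsto (fun α : ℝ => t/2 * Real.exp α) atTop atTop :=
        Tendsto.const_mul_atTop (by positivity) Real.tendsto_exp_atTop
      have := Real.tendsto_exp_neg_atTop_nhds_zero.comp h1'
      have h2 := this.const_mul (-(2/t))
      simpa using h2
  apply Integrable.mono hd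
  · exact ((Real.continuous_exp.comp (continuous_const.mul Real.continuous_cosh).neg).mul
      hg).aestronglyMeasurable
  · rw [ae_restrict_iff' measurableSet_Ioi]
    filter_upwards with x hx
    have hx0 : (0:ℝ) ≤ x := le_of_lt hx
    have hc1 : Real.exp x / 2 ≤ Real.cosh x := by
      rw [Real.cosh_eq]; nlinarith [Real.exp_pos (-x)]
    have hc2 : Real.cosh x ≤ Real.exp x := by
      rw [Real.cosh_eq]
      have := Real.exp_le_exp.2 (neg_le_self hx0)
      linarith [Real.exp_pos x]
    rw [Real.norm_eq_abs, Real.norm_eq_abs,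
      abs_of_nonneg (mul_nonneg (Real.exp_pos _).le (h0 x)),
      abs_of_nonneg (by positivity)]
    have he : Real.exp (-(t * Real.cosh x)) ≤ Real.exp (-(t/2 * Real.exp x)) := by
      apply Real.exp_le_exp.2
      rw [neg_le_neg_iff]
      calc t/2 * Real.exp x = t * (Real.exp x / 2) := by ring
        _ ≤ t * Real.cosh x := by
          apply mul_le_mul_of_nonneg_left hc1 ht.le
    calc Real.exp (-(t * Real.cosh x)) * g x
        ≤ Real.exp (-(t/2 * Real.exp x)) * Real.exp x := by
          apply mul_le_mul he ((h1 x hx0).trans hc2) (h0 x) (Real.exp_pos _).le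
      _ = Real.exp x * Real.exp (-(t/2 * Real.exp x)) := by ring

lemma integrableOn_B0 {t : ℝ} (ht : 0 < t) :
    IntegrableOn (fun β => Real.exp (-(t * Real.cosh β))) (Set.Ioi 0) := by
  have := integrableOn_exp_cosh ht (g := fun _ => 1) continuous_const (fun _ => zero_le_one)
    (fun α _ => Real.one_le_cosh α)
  simpa using this

lemma integrableOn_E0 {t : ℝ} (ht : 0 < t) :
    IntegrableOn (fun β => Real.exp (-(t * Real.cosh β)) * (Real.cosh β)⁻¹) (Set.Ioi 0) := by
  apply integrableOn_exp_cosh ht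
  · exact Real.continuous_cosh.inv₀ (fun x => (Real.cosh_pos x).ne')
  · intro α; positivity
  · intro α _
    have h1 := Real.one_le_cosh α
    calc (Real.cosh α)⁻¹ ≤ 1 := by
          rw [inv_le_one_iff₀]; right; exact h1
      _ ≤ Real.cosh α := h1

lemma integrableOn_K1 {t : ℝ} (ht : 0 < t) :
    IntegrableOn (fun α => Real.exp (-(t * Real.cosh α)) * Real.cosh α) (Set.Ioi 0) :=
  integrableOn_exp_cosh ht Real.continuous_cosh (fun α => (Real.cosh_pos α).le)
    (fun _ _ => le_rfl)

lemma besselK_one_nonneg {s : ℝ} : 0 ≤ besselK 1 s := by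
  rw [besselK_one]
  apply setIntegral_nonneg measurableSet_Ioi
  intro x _; positivity

lemma key1 {t : ℝ} (ht : 0 < t) :
    ∫ s in Set.Ioi t, s * besselK 1 s = t * B0 t + E0 t := by
  have hKmeas : StronglyMeasurable (besselK 1) := by
    apply StronglyMeasurable.integral_prod_right
      (f := fun s α => Real.exp (-s * Real.cosh α) * Real.cosh (((1:ℤ):ℝ) * α))
    apply Continuous.stronglyMeasurable
    fun_prop
  have step1 : ∫ s in Set.Ioi t, s * besselK 1 s
      = (∫⁻ s in Set.Ioi t, ENNReal.ofReal (s * besselK 1 s)).toReal := by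
    apply integral_eq_lintegral_of_nonneg_ae
    · apply (ae_restrict_iff' measurableSet_Ioi).2
      filter_upwards with s hs
      exact mul_nonneg (le_of_lt (ht.trans hs)) besselK_one_nonneg
    · exact (measurable_id.stronglyMeasurable.mul hKmeas).aestronglyMeasurable
  have step2 : ∫⁻ s in Set.Ioi t, ENNReal.ofReal (s * besselK 1 s)
      = ∫⁻ s in Set.Ioi t, ∫⁻ α in Set.Ioi (0:ℝ),
          ENNReal.ofReal (s * Real.exp (-(s * Real.cosh α)) * Real.cosh α) := by
    apply lintegral_congr_ae
    apply (ae_restrict_iff' measurableSet_Ioi).2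
    filter_upwards with s hs
    have hs0 : 0 < s := ht.trans hs
    have : s * besselK 1 s = ∫ α in Set.Ioi (0:ℝ),
        s * Real.exp (-(s * Real.cosh α)) * Real.cosh α := by
      rw [besselK_one, ← MeasureTheory.integral_const_mul]
      congr 1; ext α; ring
    rw [this, ofReal_integral_eq_lintegral_ofReal]
    · have h := (integrableOn_K1 hs0).const_mul s
      have : (fun α => s * Real.exp (-(s * Real.cosh α)) * Real.cosh α)
          = fun α => s * (Real.exp (-(s * Real.cosh α)) * Real.cosh α) := by
        ext α; ring
      rw [this]
      exact h
    · apply (ae_restrict_iff' measurableSet_Ioi).2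
      filter_upwards with α hα
      have := (Real.cosh_pos α).le
      positivity
  have step3 : (∫⁻ s in Set.Ioi t, ∫⁻ α in Set.Ioi (0:ℝ),
        ENNReal.ofReal (s * Real.exp (-(s * Real.cosh α)) * Real.cosh α))
      = ∫⁻ α in Set.Ioi (0:ℝ), ∫⁻ s in Set.Ioi t,
        ENNReal.ofReal (s * Real.exp (-(s * Real.cosh α)) * Real.cosh α) := by
    apply lintegral_lintegral_swap
    apply Measurable.aemeasurable
    apply Measurable.ennreal_ofReal
    have : Continuous (fun p : ℝ × ℝ => p.1 * Real.exp (-(p.1 * Real.cosh p.2)) * Real.cosh p.2) := by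
      fun_prop
    exact this.measurable
  have step4 : ∀ α : ℝ, (∫⁻ s in Set.Ioi t,
        ENNReal.ofReal (s * Real.exp (-(s * Real.cosh α)) * Real.cosh α))
      = ENNReal.ofReal ((t + (Real.cosh α)⁻¹) * Real.exp (-(t * Real.cosh α))) := by
    intro α
    have hc1 : 1 ≤ Real.cosh α := Real.one_le_cosh α
    have hc0 : (0:ℝ) < Real.cosh α := lt_of_lt_of_le one_pos hc1
    have harr : (fun s => s * Real.exp (-(s * Real.cosh α)) * Real.cosh α)
        = fun s => (s * Real.exp (-(Real.cosh α * s))) * Real.cosh α := by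
      ext s; rw [mul_comm s (Real.cosh α)]
    rw [← ofReal_integral_eq_lintegral_ofReal]
    · congr 1
      rw [harr, MeasureTheory.integral_mul_const, integral_mul_exp hc0 ht.le]
      rw [mul_comm (Real.cosh α) t]
      field_simp
    · rw [harr]
      exact (integrableOn_mul_exp hc0 ht.le).mul_const _
    · apply (ae_restrict_iff' measurableSet_Ioi).2
      filter_upwards with s hs
      have hs0 : (0:ℝ) ≤ s := (ht.trans hs).le
      have := (Real.cosh_pos α).le
      positivity
  have hintsum : IntegrableOn
      (fun α => (t + (Real.cosh α)⁻¹) * Real.exp (-(t * Real.cosh α))) (Set.Ioi 0) := by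
    have h := ((integrableOn_B0 ht).const_mul t).add (integrableOn_E0 ht)
    have : (fun α => (t + (Real.cosh α)⁻¹) * Real.exp (-(t * Real.cosh α)))
        = fun α => t * Real.exp (-(t * Real.cosh α))
          + Real.exp (-(t * Real.cosh α)) * (Real.cosh α)⁻¹ := by
      ext α; ring
    rw [this]; exact h
  have step5 : (∫⁻ α in Set.Ioi (0:ℝ),
        ENNReal.ofReal ((t + (Real.cosh α)⁻¹) * Real.exp (-(t * Real.cosh α))))
      = ENNReal.ofReal (∫ α in Set.Ioi (0:ℝ),
        (t + (Real.cosh α)⁻¹) * Real.exp (-(t * Real.cosh α))) := by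
    rw [ofReal_integral_eq_lintegral_ofReal hintsum]
    apply (ae_restrict_iff' measurableSet_Ioi).2
    filter_upwards with α hα
    have h1 : (0:ℝ) < Real.cosh α := Real.cosh_pos α
    positivity
  have step6 : ∫ α in Set.Ioi (0:ℝ), (t + (Real.cosh α)⁻¹) * Real.exp (-(t * Real.cosh α))
      = t * B0 t + E0 t := by
    have harr : (fun α => (t + (Real.cosh α)⁻¹) * Real.exp (-(t * Real.cosh α)))
        = fun α => t * Real.exp (-(t * Real.cosh α))
          + Real.exp (-(t * Real.cosh α)) * (Real.cosh α)⁻¹ := by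
      ext α; ring
    rw [harr, integral_add ((integrableOn_B0 ht).const_mul t) (integrableOn_E0 ht),
      MeasureTheory.integral_const_mul]
    rfl
  have hnn : 0 ≤ t * B0 t + E0 t := by
    have hB : 0 ≤ B0 t := setIntegral_nonneg measurableSet_Ioi (fun x _ => (Real.exp_pos _).le)
    have hE : 0 ≤ E0 t := setIntegral_nonneg measurableSet_Ioi
      (fun x _ => by have := (Real.cosh_pos x).le; positivity)
    positivity
  rw [step1, step2, step3, lintegral_congr (fun α => step4 α), step5, step6,
    ENNReal.toReal_ofReal hnn]


noncomputable def A0 (t : ℝ) : ℝ := ∫ α in (0:ℝ)..π, Real.exp (t * Real.cos α)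


lemma sqrt_two_pi_div_two : Real.sqrt (2*π)/2 = Real.sqrt (π/2) := by
  rw [show π/2 = (2*π)/4 by ring, Real.sqrt_div' (2*π) (by norm_num : (0:ℝ) ≤ 4),
    show Real.sqrt 4 = 2 by rw [show (4:ℝ) = 2^2 by norm_num, Real.sqrt_sq (by norm_num : (0:ℝ) ≤ 2)]]

lemma one_sub_cos_ge_global {α : ℝ} (h0 : 0 ≤ α) (hπ : α ≤ π) :
    2*α^2/π^2 ≤ 1 - Real.cos α := by
  have hs : α/π ≤ Real.sin (α/2) := by
    have := Real.mul_le_sin (x := α/2) (by linarith) (by linarith)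
    calc α/π = 2/π * (α/2) := by field_simp
      _ ≤ Real.sin (α/2) := this
  have h1 : 1 - Real.cos α = 2 * Real.sin (α/2)^2 := by
    have := Real.cos_two_mul (α/2); have := Real.sin_sq_add_cos_sq (α/2)
    rw [show 2*(α/2) = α by ring] at *; linarith
  have hπ0 : (0:ℝ) < π := Real.pi_pos
  have hα : 0 ≤ α/π := by positivity
  rw [h1]
  have := mul_self_le_mul_self hα hs
  calc 2*α^2/π^2 = 2 * ((α/π) * (α/π)) := by field_simp
    _ ≤ 2 * (Real.sin (α/2) * Real.sin (α/2)) := by linarith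
    _ = 2 * Real.sin (α/2)^2 := by ring

lemma A0_nonneg (t : ℝ) : 0 ≤ A0 t :=
  intervalIntegral.integral_nonneg Real.pi_pos.le (fun x _ => (Real.exp_pos _).le)

lemma A0_le_pi_exp {t : ℝ} (ht : 0 ≤ t) : A0 t ≤ π * Real.exp t := by
  have : A0 t ≤ ∫ _ in (0:ℝ)..π, Real.exp t := by
    apply intervalIntegral.integral_mono_on Real.pi_pos.le
    · exact (Real.continuous_exp.comp (continuous_const.mul Real.continuous_cos)).intervalIntegrable _ _
    · exact intervalIntegrable_const
    · intro x _
      exact Real.exp_le_exp.2 (by nlinarith [Real.cos_le_one x, Real.neg_one_le_cos x])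
  simpa using this

lemma P_le {t : ℝ} (ht : 0 < t) :
    Real.sqrt t * (Real.exp (-t) * A0 t) ≤ Real.sqrt (π^3/2)/2 := by
  have h1 : Real.exp (-t) * A0 t ≤ ∫ α in (0:ℝ)..π, Real.exp (-(t * (2/π^2) * α^2)) := by
    rw [show Real.exp (-t) * A0 t = ∫ α in (0:ℝ)..π, Real.exp (-t) * Real.exp (t * Real.cos α) by
      rw [A0, ← intervalIntegral.integral_const_mul]]
    apply intervalIntegral.integral_mono_on Real.pi_pos.le
    · exact (continuous_const.mul (Real.continuous_exp.comp
        (continuous_const.mul Real.continuous_cos))).intervalIntegrable _ _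
    · apply Continuous.intervalIntegrable; fun_prop
    · intro x hx
      rw [← Real.exp_add]
      apply Real.exp_le_exp.2
      have := one_sub_cos_ge_global hx.1 hx.2
      have h3 := mul_le_mul_of_nonneg_left this ht.le
      have h4 : t * (2*x^2/π^2) = t*(2/π^2)*x^2 := by ring
      nlinarith []
  have h2 : (∫ α in (0:ℝ)..π, Real.exp (-(t * (2/π^2) * α^2)))
      ≤ ∫ α in Set.Ioi (0:ℝ), Real.exp (-(t * (2/π^2) * α^2)) := by
    rw [intervalIntegral.integral_of_le Real.pi_pos.le]
    apply setIntegral_mono_set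
    · have hb : (0:ℝ) < t*(2/π^2) := by positivity
      have := (integrable_exp_neg_mul_sq hb).integrableOn (s := Set.Ioi 0)
      apply this.congr_fun _ measurableSet_Ioi
      intro x _; simp only [neg_mul]
    · filter_upwards with x using (Real.exp_pos _).le
    · exact HasSubset.Subset.eventuallyLE Set.Ioc_subset_Ioi_self
  have h3 : Real.sqrt t * ∫ α in Set.Ioi (0:ℝ), Real.exp (-(t * (2/π^2) * α^2))
      = Real.sqrt (π/(2/π^2))/2 := gauss_eq_Ioi (by positivity) ht
  have h4 : π/(2/π^2) = π^3/2 := by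
    have := Real.pi_pos; field_simp
  calc Real.sqrt t * (Real.exp (-t) * A0 t)
      ≤ Real.sqrt t * ∫ α in Set.Ioi (0:ℝ), Real.exp (-(t * (2/π^2) * α^2)) :=
        mul_le_mul_of_nonneg_left (h1.trans h2) (Real.sqrt_nonneg t)
    _ = Real.sqrt (π/(2/π^2))/2 := h3
    _ = Real.sqrt (π^3/2)/2 := by rw [h4]

lemma one_add_sq_div_two_le_cosh (β : ℝ) : 1 + β^2/2 ≤ Real.cosh β := by
  have h2 : Real.cosh β = 1 + 2 * Real.sinh (β/2)^2 := by
    have := Real.cosh_two_mul (β/2)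
    have := Real.cosh_sq (β/2)
    rw [show 2*(β/2) = β by ring] at *
    linarith
  rcases le_or_gt 0 β with hb | hb
  · have : β/2 ≤ Real.sinh (β/2) := (Real.self_le_sinh_iff).2 (by linarith)
    nlinarith [this]
  · have h1 : Real.sinh (β/2) ≤ β/2 := Real.sinh_le_self_iff.2 (by linarith)
    nlinarith [h1]

lemma B0_nonneg {t : ℝ} : 0 ≤ B0 t :=
  setIntegral_nonneg measurableSet_Ioi (fun x _ => (Real.exp_pos _).le)

lemma E0_nonneg {t : ℝ} : 0 ≤ E0 t :=
  setIntegral_nonneg measurableSet_Ioi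
    (fun x _ => by have := (Real.cosh_pos x).le; positivity)

lemma Q_le {t : ℝ} (ht : 0 < t) :
    Real.sqrt t * (Real.exp t * B0 t) ≤ Real.sqrt (π/2) := by
  have h1 : Real.exp t * B0 t ≤ ∫ β in Set.Ioi (0:ℝ), Real.exp (-(t * (1/2) * β^2)) := by
    rw [show Real.exp t * B0 t
        = ∫ β in Set.Ioi (0:ℝ), Real.exp t * Real.exp (-(t * Real.cosh β)) by
      rw [B0, ← MeasureTheory.integral_const_mul]]
    apply setIntegral_mono_on
    · exact ((integrableOn_B0 ht).const_mul _)
    · have hb : (0:ℝ) < t*(1/2) := by positivity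
      have := (integrable_exp_neg_mul_sq hb).integrableOn (s := Set.Ioi 0)
      apply this.congr_fun _ measurableSet_Ioi
      intro x _; simp only [neg_mul]
    · exact measurableSet_Ioi
    · intro x _
      rw [← Real.exp_add]
      apply Real.exp_le_exp.2
      have := one_add_sq_div_two_le_cosh x
      nlinarith [mul_le_mul_of_nonneg_left this ht.le]
  have h3 : Real.sqrt t * ∫ β in Set.Ioi (0:ℝ), Real.exp (-(t * (1/2) * β^2))
      = Real.sqrt (π/(1/2))/2 := gauss_eq_Ioi (by norm_num) ht
  calc Real.sqrt t * (Real.exp t * B0 t)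
      ≤ Real.sqrt t * ∫ β in Set.Ioi (0:ℝ), Real.exp (-(t * (1/2) * β^2)) :=
        mul_le_mul_of_nonneg_left h1 (Real.sqrt_nonneg t)
    _ = Real.sqrt (π/(1/2))/2 := h3
    _ = Real.sqrt (π/2) := by
        rw [show π/(1/2) = 2*π by ring]
        exact sqrt_two_pi_div_two

lemma E0_le {t : ℝ} (ht : 0 < t) : E0 t ≤ 2 * Real.exp (-t) := by
  have h1 : E0 t ≤ ∫ β in Set.Ioi (0:ℝ), Real.exp (-t) * (2 * Real.exp (-β)) := by
    apply setIntegral_mono_on (integrableOn_E0 ht)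
    · have h := (exp_neg_integrableOn_Ioi 0 one_pos).const_mul (Real.exp (-t) * 2)
      refine h.congr ?_
      apply (ae_restrict_iff' measurableSet_Ioi).2
      filter_upwards with x hx
      simp only [neg_mul, one_mul]
      ring
    · exact measurableSet_Ioi
    · intro x hx
      have hx0 : (0:ℝ) ≤ x := (le_of_lt hx)
      have hc1 : Real.exp x / 2 ≤ Real.cosh x := by
        rw [Real.cosh_eq]; nlinarith [Real.exp_pos (-x)]
      have he : Real.exp (-(t * Real.cosh x)) ≤ Real.exp (-t) :=
        Real.exp_le_exp.2 (by nlinarith [Real.one_le_cosh x])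
      have hinv : (Real.cosh x)⁻¹ ≤ 2 * Real.exp (-x) := by
        rw [Real.exp_neg]
        have h2 : Real.exp x / 2 > 0 := by positivity
        have := one_div_le_one_div_of_le h2 hc1
        rw [one_div, one_div] at this
        calc (Real.cosh x)⁻¹ ≤ (Real.exp x / 2)⁻¹ := this
          _ = 2 * (Real.exp x)⁻¹ := by rw [inv_div, div_eq_mul_inv]
      exact mul_le_mul he hinv (by positivity) (Real.exp_pos _).le
  calc E0 t ≤ ∫ β in Set.Ioi (0:ℝ), Real.exp (-t) * (2 * Real.exp (-β)) := h1
    _ = Real.exp (-t) * (2 * ∫ β in Set.Ioi (0:ℝ), Real.exp (-β)) := by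
        rw [MeasureTheory.integral_const_mul, MeasureTheory.integral_const_mul]
    _ = 2 * Real.exp (-t) := by rw [integral_exp_neg_Ioi_zero]; ring

lemma E0_le_B0 {t : ℝ} (ht : 0 < t) : E0 t ≤ B0 t := by
  apply setIntegral_mono_on (integrableOn_E0 ht) (integrableOn_B0 ht) measurableSet_Ioi
  intro x _
  have h1 := Real.one_le_cosh x
  have h2 : (Real.cosh x)⁻¹ ≤ 1 := by
    rw [inv_le_one_iff₀]; right; exact h1
  nlinarith [Real.exp_pos (-(t * Real.cosh x))]

lemma term1_le {t : ℝ} (ht : 0 < t) : t * ((1/π) * A0 t) * B0 t ≤ π/4 := by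
  have h4 : Real.sqrt t * Real.sqrt t = t := Real.mul_self_sqrt ht.le
  have hPQ : t * ((1/π) * A0 t) * B0 t
      = (1/π) * ((Real.sqrt t * (Real.exp (-t) * A0 t)) * (Real.sqrt t * (Real.exp t * B0 t))) := by
    have h5 : Real.exp (-t) * Real.exp t = 1 := by rw [← Real.exp_add]; simp
    calc t * ((1/π) * A0 t) * B0 t
        = (1/π) * ((Real.sqrt t * Real.sqrt t) * ((Real.exp (-t) * Real.exp t) * (A0 t * B0 t))) := by
          rw [h4, h5]; ring
      _ = (1/π) * ((Real.sqrt t * (Real.exp (-t) * A0 t)) * (Real.sqrt t * (Real.exp t * B0 t))) := by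
          ring
  rw [hPQ]
  have hP0 : 0 ≤ Real.sqrt t * (Real.exp (-t) * A0 t) := by
    have := A0_nonneg t; positivity
  have hQ0 : (0:ℝ) ≤ Real.sqrt (π/2) := Real.sqrt_nonneg _
  have hmul : (Real.sqrt t * (Real.exp (-t) * A0 t)) * (Real.sqrt t * (Real.exp t * B0 t))
      ≤ (Real.sqrt (π^3/2)/2) * Real.sqrt (π/2) := by
    apply mul_le_mul (P_le ht) (Q_le ht) _ (by positivity)
    · have := B0_nonneg (t := t); positivity
  have hval : (1/π) * ((Real.sqrt (π^3/2)/2) * Real.sqrt (π/2)) = π/4 := by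
    have hs : Real.sqrt (π^3/2) * Real.sqrt (π/2) = π^2/2 := by
      rw [← Real.sqrt_mul (by positivity), show (π^3/2)*(π/2) = (π^2/2)^2 by ring,
        Real.sqrt_sq (by positivity)]
    have hπ := Real.pi_pos
    rw [show (Real.sqrt (π^3/2)/2) * Real.sqrt (π/2)
        = (Real.sqrt (π^3/2) * Real.sqrt (π/2))/2 by ring, hs]
    field_simp
    ring
  calc (1/π) * ((Real.sqrt t * (Real.exp (-t) * A0 t)) * (Real.sqrt t * (Real.exp t * B0 t)))
      ≤ (1/π) * ((Real.sqrt (π^3/2)/2) * Real.sqrt (π/2)) := by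
        apply mul_le_mul_of_nonneg_left hmul (by positivity)
    _ = π/4 := hval

section TENDSTO
open MeasureTheory Real Set Filter intervalIntegral

lemma tendsto_sqrt_mul_exp_zero {ε : ℝ} (hε : 0 < ε) :
    Tendsto (fun t : ℝ => Real.sqrt t * Real.exp (-(ε*t))) atTop (nhds 0) := by
  have h1 : Tendsto (fun s : ℝ => ε * s) atTop atTop := Tendsto.const_mul_atTop hε tendsto_id
  have h2 : Tendsto (fun x : ℝ => x * Real.exp (-x)) atTop (nhds 0) := by
    simpa using Real.tendsto_pow_mul_exp_neg_atTop_nhds_zero 1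
  have h3 := (h2.comp h1).const_mul (1/ε)
  simp only [mul_zero] at h3
  have h4 : Tendsto (fun t : ℝ => t * Real.exp (-(ε*t))) atTop (nhds 0) := by
    apply h3.congr
    intro t
    simp only [Function.comp]
    field_simp
  apply squeeze_zero' (t₀ := atTop)
  · filter_upwards [eventually_ge_atTop 0] with t ht
    positivity
  · filter_upwards [eventually_ge_atTop 1] with t ht
    have : Real.sqrt t ≤ t :=
      calc Real.sqrt t ≤ Real.sqrt (t^2) := Real.sqrt_le_sqrt (by nlinarith)
        _ = t := Real.sqrt_sq (by linarith)
    exact mul_le_mul_of_nonneg_right this (Real.exp_pos _).le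
  · exact h4

lemma exists_delta {g : ℝ → ℝ} (hg : Continuous g) (hg0 : g 0 = 1) {s : Set ℝ}
    (hs : s ∈ nhds (Real.sqrt (π/2))) {δ0 : ℝ} (hδ0 : 0 < δ0) :
    ∃ δ : ℝ, 0 < δ ∧ δ < δ0 ∧ Real.sqrt (π/(g δ/2))/2 ∈ s := by
  have h1 : ContinuousAt (fun δ => π/(g δ/2)) 0 := by
    apply ContinuousAt.div continuousAt_const ((hg.continuousAt).div_const 2)
    rw [hg0]; norm_num
  have hf : ContinuousAt (fun δ : ℝ => Real.sqrt (π/(g δ/2))/2) 0 :=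
    ((Real.continuous_sqrt.continuousAt).comp h1).div_const 2
  have hval : Real.sqrt (π/(g 0/2))/2 = Real.sqrt (π/2) := by
    rw [hg0, show π/((1:ℝ)/2) = 2*π by ring, sqrt_two_pi_div_two]
  have hmem : s ∈ nhds (Real.sqrt (π/(g 0/2))/2) := by rw [hval]; exact hs
  have h2 : ∀ᶠ δ in nhds (0:ℝ), Real.sqrt (π/(g δ/2))/2 ∈ s := hf hmem
  have h3 : ∀ᶠ δ in nhds (0:ℝ), δ < δ0 := eventually_lt_nhds hδ0
  have h4 : ∀ᶠ δ in nhdsWithin (0:ℝ) (Set.Ioi 0),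
      (Real.sqrt (π/(g δ/2))/2 ∈ s ∧ δ < δ0) ∧ 0 < δ := by
    apply Filter.Eventually.and
    · exact eventually_nhdsWithin_of_eventually_nhds (h2.and h3)
    · exact eventually_mem_nhdsWithin
  obtain ⟨δ, ⟨hmem', hlt⟩, hpos⟩ := h4.exists
  exact ⟨δ, hpos, hlt, hmem'⟩

lemma Q_tendsto : Tendsto (fun t : ℝ => Real.sqrt t * (Real.exp t * B0 t)) atTop
    (nhds (Real.sqrt (π/2))) := by
  rw [tendsto_order]
  constructor
  · intro b hb
    obtain ⟨δ, hδ0, hδ1, hbf⟩ := exists_delta Real.continuous_cosh Real.cosh_zero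
      (Ioi_mem_nhds hb) (one_pos)
    have hcδ : (0:ℝ) < Real.cosh δ/2 := by positivity
    have hlow : ∀ t : ℝ, 0 < t →
        Real.sqrt t * ∫ β in (0:ℝ)..δ, Real.exp (-(t * (Real.cosh δ/2) * β^2))
          ≤ Real.sqrt t * (Real.exp t * B0 t) := by
      intro t ht
      apply mul_le_mul_of_nonneg_left _ (Real.sqrt_nonneg t)
      have hrw : Real.exp t * B0 t
          = ∫ β in Set.Ioi (0:ℝ), Real.exp t * Real.exp (-(t * Real.cosh β)) := by
        rw [B0, ← MeasureTheory.integral_const_mul]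
      rw [hrw, intervalIntegral.integral_of_le hδ0.le]
      calc ∫ β in Set.Ioc (0:ℝ) δ, Real.exp (-(t * (Real.cosh δ/2) * β^2))
          ≤ ∫ β in Set.Ioc (0:ℝ) δ, Real.exp t * Real.exp (-(t * Real.cosh β)) := by
            apply setIntegral_mono_on
            · apply Continuous.integrableOn_Ioc; fun_prop
            · apply Continuous.integrableOn_Ioc; fun_prop
            · exact measurableSet_Ioc
            · intro x hx
              rw [← Real.exp_add]
              apply Real.exp_le_exp.2
              have hc1 : Real.cosh x - 1 ≤ x^2/2 * Real.cosh x := cosh_sub_one_le hx.1.le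
              have hc2 : Real.cosh x ≤ Real.cosh δ := by
                apply Real.cosh_le_cosh.2
                rw [abs_of_nonneg hx.1.le, abs_of_nonneg hδ0.le]
                exact hx.2
              have hx2 : x^2 ≤ δ^2 := by nlinarith [hx.1.le, hx.2]
              have hch0 : (0:ℝ) < Real.cosh x := Real.cosh_pos x
              nlinarith [mul_le_mul_of_nonneg_left hc1 ht.le,
                mul_le_mul_of_nonneg_left hc2 (mul_nonneg ht.le (sq_nonneg x))]
        _ ≤ ∫ β in Set.Ioi (0:ℝ), Real.exp t * Real.exp (-(t * Real.cosh β)) := by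
            apply setIntegral_mono_set ((integrableOn_B0 ht).const_mul _)
            · apply (ae_restrict_iff' measurableSet_Ioi).2
              filter_upwards with x hx
              positivity
            · exact HasSubset.Subset.eventuallyLE Set.Ioc_subset_Ioi_self
    have hg := gauss_tendsto_finite hcδ hδ0
    rw [tendsto_order] at hg
    filter_upwards [hg.1 b hbf, eventually_gt_atTop 0] with t h1 h2
    exact lt_of_lt_of_le h1 (hlow t h2)
  · intro b hb
    filter_upwards [eventually_gt_atTop 0] with t ht
    exact lt_of_le_of_lt (Q_le ht) hb

lemma P_tendsto : Tendsto (fun t : ℝ => Real.sqrt t * (Real.exp (-t) * A0 t)) atTop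
    (nhds (Real.sqrt (π/2))) := by
  rw [tendsto_order]
  constructor
  · intro b hb
    have hlow : ∀ t : ℝ, 0 < t →
        Real.sqrt t * ∫ α in (0:ℝ)..π, Real.exp (-(t * (1/2) * α^2))
          ≤ Real.sqrt t * (Real.exp (-t) * A0 t) := by
      intro t ht
      apply mul_le_mul_of_nonneg_left _ (Real.sqrt_nonneg t)
      rw [show Real.exp (-t) * A0 t
          = ∫ α in (0:ℝ)..π, Real.exp (-t) * Real.exp (t * Real.cos α) by
        rw [A0, ← intervalIntegral.integral_const_mul]]
      apply intervalIntegral.integral_mono_on Real.pi_pos.le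
      · apply Continuous.intervalIntegrable; fun_prop
      · apply Continuous.intervalIntegrable; fun_prop
      · intro x _
        rw [← Real.exp_add]
        apply Real.exp_le_exp.2
        have := Real.one_sub_sq_div_two_le_cos (x := x)
        nlinarith [mul_le_mul_of_nonneg_left this ht.le]
    have hg := gauss_tendsto_finite (a := (1:ℝ)/2) (by norm_num) Real.pi_pos
    have hval : Real.sqrt (π/(1/2))/2 = Real.sqrt (π/2) := by
      rw [show π/((1:ℝ)/2) = 2*π by ring, sqrt_two_pi_div_two]
    rw [hval, tendsto_order] at hg
    filter_upwards [hg.1 b hb, eventually_gt_atTop 0] with t h1 h2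
    exact lt_of_lt_of_le h1 (hlow t h2)
  · intro b hb
    obtain ⟨δ, hδ0, hδ1, hbf⟩ := exists_delta Real.continuous_cos Real.cos_zero
      (Iio_mem_nhds hb) (show (0:ℝ) < π/2 by positivity)
    have hcδ0 : (0:ℝ) < Real.cos δ := Real.cos_pos_of_mem_Ioo
      ⟨by linarith [Real.pi_pos], hδ1⟩
    have hεpos : (0:ℝ) < 1 - Real.cos δ := by
      have := one_sub_cos_ge (le_of_lt hδ1) hδ0.le (le_refl δ)
      nlinarith
    have hup : ∀ t : ℝ, 0 < t →
        Real.sqrt t * (Real.exp (-t) * A0 t)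
          ≤ Real.sqrt t * (∫ α in (0:ℝ)..δ, Real.exp (-(t * (Real.cos δ/2) * α^2)))
            + (π - δ) * (Real.sqrt t * Real.exp (-((1 - Real.cos δ)*t))) := by
      intro t ht
      have hrw : Real.exp (-t) * A0 t
          = (∫ α in (0:ℝ)..δ, Real.exp (-t) * Real.exp (t * Real.cos α))
            + ∫ α in δ..π, Real.exp (-t) * Real.exp (t * Real.cos α) := by
        rw [A0, ← intervalIntegral.integral_const_mul]
        rw [intervalIntegral.integral_add_adjacent_intervals] <;>
          · apply Continuous.intervalIntegrable; fun_prop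
      have hb1 : (∫ α in (0:ℝ)..δ, Real.exp (-t) * Real.exp (t * Real.cos α))
          ≤ ∫ α in (0:ℝ)..δ, Real.exp (-(t * (Real.cos δ/2) * α^2)) := by
        apply intervalIntegral.integral_mono_on hδ0.le
        · apply Continuous.intervalIntegrable; fun_prop
        · apply Continuous.intervalIntegrable; fun_prop
        · intro x hx
          rw [← Real.exp_add]
          apply Real.exp_le_exp.2
          have := one_sub_cos_ge (le_of_lt hδ1) hx.1 hx.2
          nlinarith [mul_le_mul_of_nonneg_left this ht.le]
      have hb2 : (∫ α in δ..π, Real.exp (-t) * Real.exp (t * Real.cos α))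
          ≤ (π - δ) * Real.exp (-((1 - Real.cos δ)*t)) := by
        have : (∫ α in δ..π, Real.exp (-t) * Real.exp (t * Real.cos α))
            ≤ ∫ _ in δ..π, Real.exp (-((1 - Real.cos δ)*t)) := by
          apply intervalIntegral.integral_mono_on (by linarith [hδ1, Real.pi_pos, Real.pi_gt_three])
          · apply Continuous.intervalIntegrable; fun_prop
          · exact intervalIntegrable_const
          · intro x hx
            rw [← Real.exp_add]
            apply Real.exp_le_exp.2
            have hcc : Real.cos x ≤ Real.cos δ :=
              Real.cos_le_cos_of_nonneg_of_le_pi hδ0.le hx.2 hx.1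
            nlinarith [mul_le_mul_of_nonneg_left hcc ht.le]
        simpa using this
      calc Real.sqrt t * (Real.exp (-t) * A0 t)
          = Real.sqrt t * ((∫ α in (0:ℝ)..δ, Real.exp (-t) * Real.exp (t * Real.cos α))
            + ∫ α in δ..π, Real.exp (-t) * Real.exp (t * Real.cos α)) := by rw [hrw]
        _ ≤ Real.sqrt t * ((∫ α in (0:ℝ)..δ, Real.exp (-(t * (Real.cos δ/2) * α^2)))
            + (π - δ) * Real.exp (-((1 - Real.cos δ)*t))) := by
            apply mul_le_mul_of_nonneg_left _ (Real.sqrt_nonneg t)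
            exact add_le_add hb1 hb2
        _ = Real.sqrt t * (∫ α in (0:ℝ)..δ, Real.exp (-(t * (Real.cos δ/2) * α^2)))
            + (π - δ) * (Real.sqrt t * Real.exp (-((1 - Real.cos δ)*t))) := by
            rw [mul_add]; congr 1; ring
    have hg1 := gauss_tendsto_finite (a := Real.cos δ/2) (by positivity) hδ0
    have hg2 := (tendsto_sqrt_mul_exp_zero hεpos).const_mul (π - δ)
    simp only [mul_zero] at hg2
    have hsum := hg1.add hg2
    rw [add_zero] at hsum
    have hlt : Real.sqrt (π/(Real.cos δ/2))/2 < b := hbf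
    rw [tendsto_order] at hsum
    filter_upwards [hsum.2 b hlt, eventually_gt_atTop 0] with t h1 h2
    exact lt_of_le_of_lt (hup t h2) h1

end TENDSTO

section FINAL
open MeasureTheory Real Set Filter intervalIntegral

lemma PQ_eq {t : ℝ} (ht : 0 < t) : t * ((1/π) * A0 t) * B0 t
    = (1/π) * ((Real.sqrt t * (Real.exp (-t) * A0 t)) * (Real.sqrt t * (Real.exp t * B0 t))) := by
  have h4 : Real.sqrt t * Real.sqrt t = t := Real.mul_self_sqrt ht.le
  have h5 : Real.exp (-t) * Real.exp t = 1 := by rw [← Real.exp_add]; simp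
  calc t * ((1/π) * A0 t) * B0 t
      = (1/π) * ((Real.sqrt t * Real.sqrt t) * ((Real.exp (-t) * Real.exp t) * (A0 t * B0 t))) := by
        rw [h4, h5]; ring
    _ = (1/π) * ((Real.sqrt t * (Real.exp (-t) * A0 t)) * (Real.sqrt t * (Real.exp t * B0 t))) := by
        ring

lemma besselI_zero (t : ℝ) : besselI 0 t = (1/π) * A0 t := by
  unfold besselI A0
  norm_num

open Filter in
/-- The function `t ↦ I_0(t)·∫_t^∞ s·K_1(s) ds` is bounded on `(0,∞)`, and tends to `1/2`
as `t → ∞`. -/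
theorem besselI_mul_integral_besselK_bounded_and_tendsto :
    (∃ C : ℝ, ∀ t : ℝ, 0 < t →
      |besselI 0 t * ∫ s in Set.Ioi t, s * besselK 1 s| ≤ C) ∧
    Tendsto (fun t : ℝ => besselI 0 t * ∫ s in Set.Ioi t, s * besselK 1 s)
      atTop (nhds (1 / 2)) := by
  have hF : ∀ t : ℝ, 0 < t → besselI 0 t * ∫ s in Set.Ioi t, s * besselK 1 s
      = t * ((1/π) * A0 t) * B0 t + ((1/π) * A0 t) * E0 t := by
    intro t ht
    rw [besselI_zero, key1 ht]
    ring
  constructor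
  · refine ⟨π/4 + 2, fun t ht => ?_⟩
    rw [hF t ht]
    have hπ := Real.pi_pos
    have h1 := term1_le ht
    have hA := A0_nonneg t
    have hB : (0:ℝ) ≤ B0 t := B0_nonneg
    have hE : (0:ℝ) ≤ E0 t := E0_nonneg
    have h2 : ((1/π) * A0 t) * E0 t ≤ 2 := by
      have hee : Real.exp t * Real.exp (-t) = 1 := by rw [← Real.exp_add]; simp
      calc ((1/π) * A0 t) * E0 t
          ≤ ((1/π) * (π * Real.exp t)) * (2 * Real.exp (-t)) := by
            apply mul_le_mul (mul_le_mul_of_nonneg_left (A0_le_pi_exp ht.le) (by positivity))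
              (E0_le ht) hE (by positivity)
        _ = 2 * (Real.exp t * Real.exp (-t)) * (π / π) := by ring
        _ = 2 := by rw [hee, div_self (ne_of_gt hπ)]; ring
    rw [abs_of_nonneg (by positivity)]
    linarith
  · have hT1 : Tendsto (fun t : ℝ => t * ((1/π) * A0 t) * B0 t) atTop (nhds (1/2)) := by
      have hPQ := (P_tendsto.mul Q_tendsto).const_mul (1/π)
      have hval : (1/π) * (Real.sqrt (π/2) * Real.sqrt (π/2)) = 1/2 := by
        rw [Real.mul_self_sqrt (by positivity)]
        field_simp
      rw [hval] at hPQ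
      apply Tendsto.congr' _ hPQ
      filter_upwards [eventually_gt_atTop 0] with t ht
      exact (PQ_eq ht).symm
    have hT2 : Tendsto (fun t : ℝ => ((1/π) * A0 t) * E0 t) atTop (nhds 0) := by
      have hg : Tendsto (fun t : ℝ => (π/4) * t⁻¹) atTop (nhds 0) := by
        have := tendsto_inv_atTop_zero.const_mul (π/4)
        simpa using this
      apply squeeze_zero' _ _ hg
      · filter_upwards [eventually_gt_atTop 0] with t ht
        have := A0_nonneg t
        have : (0:ℝ) ≤ E0 t := E0_nonneg
        have := A0_nonneg t
        have hπ := Real.pi_pos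
        positivity
      · filter_upwards [eventually_gt_atTop 0] with t ht
        have hπ := Real.pi_pos
        have hA := A0_nonneg t
        calc ((1/π) * A0 t) * E0 t
            ≤ ((1/π) * A0 t) * B0 t := mul_le_mul_of_nonneg_left (E0_le_B0 ht) (by positivity)
          _ = (t * ((1/π) * A0 t) * B0 t) * t⁻¹ := by
              field_simp
          _ ≤ (π/4) * t⁻¹ := mul_le_mul_of_nonneg_right (term1_le ht) (inv_nonneg.2 ht.le)
    have hsum := hT1.add hT2
    rw [add_zero] at hsum
    apply Tendsto.congr' _ hsum
    filter_upwards [eventually_gt_atTop 0] with t ht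
    exact (hF t ht).symm

end FINAL
end
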